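/- arXiv:2402.07115 — 7 statements merged into one kernel-verified Lean document; each statement's English description precedes it below -/
import Mathlib

section
/- For every integer m ≥ 1, one has |c_{2m}| ≤ (π/2) · (1/(4√6)) · |c_{2m−1}|; in particular |c_{2m}| < |c_{2m−1}|. -/
open Real Finset Filter Topology

noncomputable def c (m : ℕ) : ℝ :=
  ((-1 : ℝ) ^ m / (4 * Real.sqrt 6) ^ m) *
    ∑ k ∈ Finset.range ((m + 1) / 2 + 1),
      ((m + 1).choose k : ℝ) * ((m + 1 - k : ℕ) : ℝ) / ((m + 1 - 2 * k).factorial : ℝ) *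
        (π / 6) ^ ((m : ℤ) - 2 * k)

lemma nat_key (m k : ℕ) (hm : 1 ≤ m) (hk : k ≤ m) :
    2 * m + 1 ≤ 3 * ((2 * m - k) * (2 * m + 1 - 2 * k)) := by
  obtain ⟨a, rfl⟩ : ∃ a, m = k + a := ⟨m - k, by omega⟩
  have h1 : 2 * (k + a) - k = k + 2 * a := by omega
  have h2 : 2 * (k + a) + 1 - 2 * k = 2 * a + 1 := by omega
  rw [h1, h2]
  nlinarith [hm, Nat.zero_le (a * k)]

lemma nat_key2 (m k : ℕ) (hm : 1 ≤ m) (hk : k ≤ m) :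
    (2 * m + 1).choose k * (2 * m + 1 - k) * (2 * m - 2 * k).factorial ≤
      3 * ((2 * m).choose k * (2 * m - k)) * (2 * m + 1 - 2 * k).factorial := by
  have hf : (2 * m + 1 - 2 * k).factorial
      = (2 * m + 1 - 2 * k) * (2 * m - 2 * k).factorial := by
    have h : 2 * m + 1 - 2 * k = (2 * m - 2 * k) + 1 := by omega
    rw [h, Nat.factorial_succ]
  have hc : (2 * m + 1).choose k * (2 * m + 1 - k) = (2 * m).choose k * (2 * m + 1) := by
    rw [← Nat.choose_mul_succ_eq]
  rw [hf, hc]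
  calc (2 * m).choose k * (2 * m + 1) * (2 * m - 2 * k).factorial
      ≤ (2 * m).choose k * (3 * ((2 * m - k) * (2 * m + 1 - 2 * k))) * (2 * m - 2 * k).factorial :=
        Nat.mul_le_mul (Nat.mul_le_mul_left _ (nat_key m k hm hk)) le_rfl
    _ = 3 * ((2 * m).choose k * (2 * m - k)) * ((2 * m + 1 - 2 * k) * (2 * m - 2 * k).factorial) := by
        ring

theorem stmt0 (m : ℕ) (hm : 1 ≤ m) :
    |c (2 * m)| ≤ π / 2 * (1 / (4 * Real.sqrt 6)) * |c (2 * m - 1)| ∧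
      |c (2 * m)| < |c (2 * m - 1)| := by
  have hA : (0:ℝ) < 4 * Real.sqrt 6 := by positivity
  have hπ : (0:ℝ) < π := Real.pi_pos
  have hπ6 : (0:ℝ) < π / 6 := by positivity
  have Spos : ∀ n : ℕ, 0 < ∑ k ∈ Finset.range ((n + 1) / 2 + 1),
      ((n + 1).choose k : ℝ) * ((n + 1 - k : ℕ) : ℝ) / ((n + 1 - 2 * k).factorial : ℝ) *
        (π / 6) ^ ((n : ℤ) - 2 * k) := by
    intro n
    apply Finset.sum_pos
    · intro k hk
      rw [Finset.mem_range] at hk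
      have h1 : 0 < (n + 1).choose k := Nat.choose_pos (by omega)
      have h2 : 0 < n + 1 - k := by omega
      have h3 : 0 < (n + 1 - 2 * k).factorial := Nat.factorial_pos _
      positivity
    · exact ⟨0, Finset.mem_range.mpr (by omega)⟩
  have habs : ∀ n : ℕ, |c n| = (∑ k ∈ Finset.range ((n + 1) / 2 + 1),
      ((n + 1).choose k : ℝ) * ((n + 1 - k : ℕ) : ℝ) / ((n + 1 - 2 * k).factorial : ℝ) *
        (π / 6) ^ ((n : ℤ) - 2 * k)) / (4 * Real.sqrt 6) ^ n := by
    intro n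
    rw [c, abs_mul, abs_div, abs_pow, abs_pow, abs_neg, abs_one, one_pow,
      abs_of_pos hA, abs_of_pos (Spos n)]
    ring
  have key : (∑ k ∈ Finset.range ((2 * m + 1) / 2 + 1),
      ((2 * m + 1).choose k : ℝ) * ((2 * m + 1 - k : ℕ) : ℝ) /
        ((2 * m + 1 - 2 * k).factorial : ℝ) * (π / 6) ^ (((2 * m : ℕ) : ℤ) - 2 * k))
      ≤ π / 2 * ∑ k ∈ Finset.range ((2 * m - 1 + 1) / 2 + 1),
      ((2 * m - 1 + 1).choose k : ℝ) * ((2 * m - 1 + 1 - k : ℕ) : ℝ) /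
        ((2 * m - 1 + 1 - 2 * k).factorial : ℝ) * (π / 6) ^ (((2 * m - 1 : ℕ) : ℤ) - 2 * k) := by
    have e1 : (2 * m + 1) / 2 + 1 = m + 1 := by omega
    have e2 : (2 * m - 1 + 1) / 2 + 1 = m + 1 := by omega
    have e3 : 2 * m - 1 + 1 = 2 * m := by omega
    rw [e1, e2, e3, Finset.mul_sum]
    apply Finset.sum_le_sum
    intro k hk
    rw [Finset.mem_range] at hk
    have hk' : k ≤ m := by omega
    have he : ((2 * m : ℕ) : ℤ) - 2 * (k : ℤ) = (((2 * m - 1 : ℕ) : ℤ) - 2 * (k : ℤ)) + 1 := by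
      omega
    rw [he, zpow_add_one₀ (ne_of_gt hπ6)]
    have hP : (0:ℝ) < (π / 6) ^ (((2 * m - 1 : ℕ) : ℤ) - 2 * (k : ℤ)) := by positivity
    have hmain : ((2 * m + 1).choose k : ℝ) * ((2 * m + 1 - k : ℕ) : ℝ) /
        ((2 * m + 1 - 2 * k).factorial : ℝ)
        ≤ 3 * (((2 * m).choose k : ℝ) * ((2 * m - k : ℕ) : ℝ)) /
          ((2 * m - 2 * k).factorial : ℝ) := by
      rw [div_le_div_iff₀ (by positivity) (by positivity)]
      exact_mod_cast nat_key2 m k hm hk'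
    calc ((2 * m + 1).choose k : ℝ) * ((2 * m + 1 - k : ℕ) : ℝ) /
          ((2 * m + 1 - 2 * k).factorial : ℝ) *
          ((π / 6) ^ (((2 * m - 1 : ℕ) : ℤ) - 2 * (k : ℤ)) * (π / 6))
        ≤ 3 * (((2 * m).choose k : ℝ) * ((2 * m - k : ℕ) : ℝ)) /
          ((2 * m - 2 * k).factorial : ℝ) *
          ((π / 6) ^ (((2 * m - 1 : ℕ) : ℤ) - 2 * (k : ℤ)) * (π / 6)) := by
          apply mul_le_mul_of_nonneg_right hmain (by positivity)
      _ = π / 2 * (((2 * m).choose k : ℝ) * ((2 * m - k : ℕ) : ℝ) /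
          ((2 * m - 2 * k).factorial : ℝ) *
          (π / 6) ^ (((2 * m - 1 : ℕ) : ℤ) - 2 * (k : ℤ))) := by ring
  have hApow : (4 * Real.sqrt 6) ^ (2 * m) = (4 * Real.sqrt 6) ^ (2 * m - 1) * (4 * Real.sqrt 6) := by
    rw [← pow_succ]
    congr 1
    omega
  have heq : ∀ S : ℝ, (π / 2 * S) / (4 * Real.sqrt 6) ^ (2 * m)
      = π / 2 * (1 / (4 * Real.sqrt 6)) * (S / (4 * Real.sqrt 6) ^ (2 * m - 1)) := by
    intro S
    rw [hApow]
    have h1 : (4 * Real.sqrt 6) ^ (2 * m - 1) ≠ 0 := by positivity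
    have h2 : (4 * Real.sqrt 6) ≠ 0 := ne_of_gt hA
    field_simp
  have goal1 : |c (2 * m)| ≤ π / 2 * (1 / (4 * Real.sqrt 6)) * |c (2 * m - 1)| := by
    rw [habs, habs]
    calc (∑ k ∈ Finset.range ((2 * m + 1) / 2 + 1),
        ((2 * m + 1).choose k : ℝ) * ((2 * m + 1 - k : ℕ) : ℝ) /
          ((2 * m + 1 - 2 * k).factorial : ℝ) * (π / 6) ^ (((2 * m : ℕ) : ℤ) - 2 * k)) /
          (4 * Real.sqrt 6) ^ (2 * m)
        ≤ (π / 2 * ∑ k ∈ Finset.range ((2 * m - 1 + 1) / 2 + 1),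
        ((2 * m - 1 + 1).choose k : ℝ) * ((2 * m - 1 + 1 - k : ℕ) : ℝ) /
          ((2 * m - 1 + 1 - 2 * k).factorial : ℝ) * (π / 6) ^ (((2 * m - 1 : ℕ) : ℤ) - 2 * k)) /
          (4 * Real.sqrt 6) ^ (2 * m) := by gcongr
      _ = π / 2 * (1 / (4 * Real.sqrt 6)) * ((∑ k ∈ Finset.range ((2 * m - 1 + 1) / 2 + 1),
        ((2 * m - 1 + 1).choose k : ℝ) * ((2 * m - 1 + 1 - k : ℕ) : ℝ) /
          ((2 * m - 1 + 1 - 2 * k).factorial : ℝ) * (π / 6) ^ (((2 * m - 1 : ℕ) : ℤ) - 2 * k)) /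
          (4 * Real.sqrt 6) ^ (2 * m - 1)) := heq _
  refine ⟨goal1, ?_⟩
  have h6 : (2:ℝ) ≤ Real.sqrt 6 := by
    nlinarith [Real.sq_sqrt (show (0:ℝ) ≤ 6 by norm_num), Real.sqrt_nonneg 6]
  have hq : π / 2 * (1 / (4 * Real.sqrt 6)) < 1 := by
    rw [show π / 2 * (1 / (4 * Real.sqrt 6)) = π / (8 * Real.sqrt 6) by ring,
      div_lt_one (by positivity)]
    nlinarith [Real.pi_lt_d2, h6]
  have hpos : 0 < |c (2 * m - 1)| := by
    rw [habs]
    exact div_pos (Spos _) (by positivity)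
  calc |c (2 * m)| ≤ π / 2 * (1 / (4 * Real.sqrt 6)) * |c (2 * m - 1)| := goal1
    _ < 1 * |c (2 * m - 1)| := mul_lt_mul_of_pos_right hq hpos
    _ = |c (2 * m - 1)| := one_mul _
end

section
/- For every integer m ≥ 0, one has |c_{2m+1}| ≤ (π/6 + 12/π) · (1/(4√6)) · |c_{2m}|; in particular |c_{2m+1}| < |c_{2m}|. -/
open Real Finset Filter Topology

noncomputable def tt (n k : ℕ) : ℝ :=
  ((n + 1).choose k : ℝ) * ((n + 1 - k : ℕ) : ℝ) / ((n + 1 - 2 * k).factorial : ℝ) *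
    (π / 6) ^ ((n : ℤ) - 2 * k)

noncomputable def S (n : ℕ) : ℝ := ∑ k ∈ Finset.range ((n + 1) / 2 + 1), tt n k

lemma pi6_pos : (0:ℝ) < π / 6 := by positivity

lemma tt_nonneg (n k : ℕ) : 0 ≤ tt n k := by
  unfold tt
  have := pi6_pos
  positivity

lemma tt_pos (n : ℕ) : 0 < tt n 0 := by
  unfold tt
  have := pi6_pos
  have h1 : (0:ℝ) < ((n + 1).choose 0 : ℝ) := by simp
  have h2 : (0:ℝ) < ((n + 1 - 0 : ℕ) : ℝ) := by
    simp; positivity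
  positivity

lemma S_pos (n : ℕ) : 0 < S n := by
  unfold S
  apply Finset.sum_pos' (fun k _ => tt_nonneg n k)
  exact ⟨0, Finset.mem_range.2 (Nat.succ_pos _), tt_pos n⟩

lemma c_eq (n : ℕ) : c n = ((-1 : ℝ) ^ n / (4 * Real.sqrt 6) ^ n) * S n := rfl

lemma sqrt6_pos : (0:ℝ) < 4 * Real.sqrt 6 := by positivity

lemma abs_c (n : ℕ) : |c n| = S n / (4 * Real.sqrt 6) ^ n := by
  rw [c_eq, abs_mul, abs_div, abs_pow, abs_pow, abs_neg, abs_one, one_pow,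
    abs_of_pos sqrt6_pos, abs_of_pos (S_pos n)]
  ring

lemma key_nat (m k j : ℕ) (h : m = k + j) :
    (2*m+2).choose k * (2*m+2-k) * (2*m+1-2*k).factorial ≤
      (2*m+1).choose k * (2*m+1-k) * (2*m+2-2*k).factorial := by
  have h1 : (2*m+1).choose k * (2*m+2) = (2*m+2).choose k * (2*m+2-k) := by
    have := Nat.choose_mul_succ_eq (2*m+1) k
    simpa using this
  have e1 : 2*m+2-k = m+2+j := by omega
  have e2 : 2*m+1-k = m+1+j := by omega
  have e3 : 2*m+2-2*k = 2+2*j := by omega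
  have e4 : 2*m+1-2*k = 1+2*j := by omega
  rw [e1] at h1
  rw [e1, e2, e3, e4]
  rw [← h1]
  have hf : (2+2*j).factorial = (2+2*j) * (1+2*j).factorial := by
    rw [show 2+2*j = (1+2*j)+1 by ring, Nat.factorial_succ]
  rw [hf]
  have hc : 2*m+2 ≤ (m+1+j) * (2+2*j) := by nlinarith
  calc (2*m+1).choose k * (2*m+2) * (1+2*j).factorial
      ≤ (2*m+1).choose k * ((m+1+j) * (2+2*j)) * (1+2*j).factorial := by
        exact Nat.mul_le_mul_right _ (Nat.mul_le_mul_left _ hc)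
    _ = (2*m+1).choose k * (m+1+j) * ((2+2*j) * (1+2*j).factorial) := by ring

lemma step1 (m k : ℕ) (hk : k ≤ m) : tt (2*m+1) k ≤ (π/6) * tt (2*m) k := by
  unfold tt
  have hne : (π/6 : ℝ) ≠ 0 := ne_of_gt pi6_pos
  have hexp : ((2*m+1 : ℕ) : ℤ) - 2*k = 1 + (((2*m : ℕ) : ℤ) - 2*k) := by
    push_cast; ring
  rw [hexp, zpow_add₀ hne, zpow_one]
  rw [show (2*m+1+1 : ℕ) = 2*m+2 by ring, show (2*m+1 : ℕ) = 2*m+1 by ring]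
  have hz : (0:ℝ) < (π/6) ^ (((2*m : ℕ) : ℤ) - 2*k) := zpow_pos pi6_pos _
  have hmain : ((2*m+2).choose k : ℝ) * ((2*m+2-k : ℕ) : ℝ) / ((2*m+2-2*k).factorial : ℝ)
      ≤ ((2*m+1).choose k : ℝ) * ((2*m+1-k : ℕ) : ℝ) / ((2*m+1-2*k).factorial : ℝ) := by
    rw [div_le_div_iff₀ (by positivity) (by positivity)]
    obtain ⟨j, hj⟩ : ∃ j, m = k + j := ⟨m - k, by omega⟩
    have := key_nat m k j hj
    calc ((2*m+2).choose k : ℝ) * ((2*m+2-k : ℕ) : ℝ) * ((2*m+1-2*k).factorial : ℝ)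
        = (((2*m+2).choose k * (2*m+2-k) * (2*m+1-2*k).factorial : ℕ) : ℝ) := by push_cast; ring
      _ ≤ (((2*m+1).choose k * (2*m+1-k) * (2*m+2-2*k).factorial : ℕ) : ℝ) := by exact_mod_cast this
      _ = ((2*m+1).choose k : ℝ) * ((2*m+1-k : ℕ) : ℝ) * ((2*m+2-2*k).factorial : ℝ) := by push_cast; ring
  calc ((2*m+2).choose k : ℝ) * ((2*m+2-k : ℕ) : ℝ) / ((2*m+2-2*k).factorial : ℝ) *
        ((π/6) * (π/6) ^ (((2*m : ℕ) : ℤ) - 2*k))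
      = (((2*m+2).choose k : ℝ) * ((2*m+2-k : ℕ) : ℝ) / ((2*m+2-2*k).factorial : ℝ)) *
        (π/6) ^ (((2*m : ℕ) : ℤ) - 2*k) * (π/6) := by ring
    _ ≤ (((2*m+1).choose k : ℝ) * ((2*m+1-k : ℕ) : ℝ) / ((2*m+1-2*k).factorial : ℝ)) *
        (π/6) ^ (((2*m : ℕ) : ℤ) - 2*k) * (π/6) := by
        apply mul_le_mul_of_nonneg_right _ (le_of_lt pi6_pos)
        exact mul_le_mul_of_nonneg_right hmain (le_of_lt hz)
    _ = (π/6) * (((2*m+1).choose k : ℝ) * ((2*m+1-k : ℕ) : ℝ) / ((2*m+1-2*k).factorial : ℝ) *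
        (π/6) ^ (((2*m : ℕ) : ℤ) - 2*k)) := by ring

lemma step2 (m : ℕ) : tt (2*m+1) (m+1) = (12/π) * tt (2*m) m := by
  unfold tt
  have hπ : (π : ℝ) ≠ 0 := ne_of_gt Real.pi_pos
  have e1 : 2*m+1+1 - (m+1) = m+1 := by omega
  have e2 : 2*m+1+1 - 2*(m+1) = 0 := by omega
  have e3 : 2*m+1 - 2*m = 1 := by omega
  have e4 : 2*m+1 - m = m+1 := by omega
  rw [e1, e2, e3, e4]
  have hc : (2*m+1+1).choose (m+1) = 2 * ((2*m+1).choose m) := by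
    rw [show 2*m+1+1 = (2*m+1)+1 by ring, Nat.choose_succ_succ']
    rw [Nat.choose_symm_half]
    · ring
  rw [hc]
  have hexp1 : ((2*m+1 : ℕ) : ℤ) - 2*((m+1 : ℕ) : ℤ) = -1 := by push_cast; ring
  have hexp2 : ((2*m : ℕ) : ℤ) - 2*((m : ℕ) : ℤ) = 0 := by push_cast; ring
  rw [hexp1, hexp2, zpow_neg_one, zpow_zero]
  simp only [Nat.factorial_zero, Nat.factorial_one, Nat.cast_mul, Nat.cast_ofNat]
  field_simp
  ring

lemma S_ineq (m : ℕ) : S (2*m+1) ≤ (π/6 + 12/π) * S (2*m) := by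
  have hr1 : (2*m+1+1)/2 + 1 = m + 2 := by omega
  have hr2 : (2*m+1)/2 + 1 = m + 1 := by omega
  unfold S
  rw [hr1, hr2, Finset.sum_range_succ]
  have h1 : ∑ k ∈ Finset.range (m+1), tt (2*m+1) k ≤
      (π/6) * ∑ k ∈ Finset.range (m+1), tt (2*m) k := by
    rw [Finset.mul_sum]
    apply Finset.sum_le_sum
    intro k hk
    have : k ≤ m := by
      have := Finset.mem_range.1 hk; omega
    exact step1 m k this
  have h2 : tt (2*m) m ≤ ∑ k ∈ Finset.range (m+1), tt (2*m) k :=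
    Finset.single_le_sum (fun k _ => tt_nonneg (2*m) k) (Finset.self_mem_range_succ m)
  have h3 := step2 m
  have h12 : (0:ℝ) ≤ 12/π := by positivity
  calc ∑ k ∈ Finset.range (m+1), tt (2*m+1) k + tt (2*m+1) (m+1)
      ≤ (π/6) * ∑ k ∈ Finset.range (m+1), tt (2*m) k + (12/π) * tt (2*m) m := by
        rw [h3]; exact add_le_add h1 le_rfl
    _ ≤ (π/6) * ∑ k ∈ Finset.range (m+1), tt (2*m) k +
        (12/π) * ∑ k ∈ Finset.range (m+1), tt (2*m) k := by
        exact add_le_add le_rfl (mul_le_mul_of_nonneg_left h2 h12)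
    _ = (π/6 + 12/π) * ∑ k ∈ Finset.range (m+1), tt (2*m) k := by ring

lemma coeff_lt_one : (π/6 + 12/π) * (1 / (4 * Real.sqrt 6)) < 1 := by
  have hπl : (3:ℝ) < π := Real.pi_gt_three
  have hπu : π < 4 := by
    have := Real.pi_lt_d2; linarith
  have h1 : π/6 + 12/π < 5 := by
    have : 12/π < 4 := by
      rw [div_lt_iff₀ (by linarith)]; linarith
    linarith
  have h2 : (2:ℝ) ≤ Real.sqrt 6 := by
    rw [show (2:ℝ) = Real.sqrt 4 by rw [show (4:ℝ) = 2^2 by norm_num, Real.sqrt_sq]; norm_num]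
    exact Real.sqrt_le_sqrt (by norm_num)
  have h3 : (8:ℝ) ≤ 4 * Real.sqrt 6 := by linarith
  have h4 : (0:ℝ) < π/6 + 12/π := by positivity
  rw [mul_one_div, div_lt_one (by linarith)]
  linarith

theorem stmt1 (m : ℕ) :
    |c (2 * m + 1)| ≤ (π / 6 + 12 / π) * (1 / (4 * Real.sqrt 6)) * |c (2 * m)| ∧
      |c (2 * m + 1)| < |c (2 * m)| := by
  have hb : (0:ℝ) < 4 * Real.sqrt 6 := sqrt6_pos
  have hbp : (0:ℝ) < (4 * Real.sqrt 6) ^ (2*m) := by positivity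
  have habs1 := abs_c (2*m+1)
  have habs2 := abs_c (2*m)
  have hS := S_ineq m
  have key : |c (2*m+1)| ≤ (π/6 + 12/π) * (1 / (4 * Real.sqrt 6)) * |c (2*m)| := by
    rw [habs1, habs2, pow_succ]
    rw [div_le_iff₀ (by positivity)]
    have : (π/6 + 12/π) * (1 / (4 * Real.sqrt 6)) * (S (2*m) / (4 * Real.sqrt 6) ^ (2*m)) *
        ((4 * Real.sqrt 6) ^ (2*m) * (4 * Real.sqrt 6)) = (π/6 + 12/π) * S (2*m) := by
      field_simp
    rw [this]
    exact hS
  refine ⟨key, lt_of_le_of_lt key ?_⟩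
  have hc0 : 0 < |c (2*m)| := by
    rw [habs2]; exact div_pos (S_pos _) (by positivity)
  calc (π/6 + 12/π) * (1 / (4 * Real.sqrt 6)) * |c (2*m)| < 1 * |c (2*m)| :=
        mul_lt_mul_of_pos_right coeff_lt_one hc0
    _ = |c (2*m)| := one_mul _
end

section
/- For every integer n ≥ 1 and every integer N ≥ 0, the tail of the series satisfies 0 < (−1)^N (Σ_{m=0}^∞ c_m / n^{m/2} − Σ_{m=0}^{N−1} c_m / n^{m/2}) < (−1)^N c_N / n^{N/2}; equivalently, the full sum differs from the N-term partial sum by θ · c_N / n^{N/2} for some θ strictly between 0 and 1. -/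
open Real Finset Filter Topology

noncomputable def T (m k : ℕ) : ℝ :=
  ((m + 1).choose k : ℝ) * ((m + 1 - k : ℕ) : ℝ) / ((m + 1 - 2 * k).factorial : ℝ) *
        (π / 6) ^ ((m : ℤ) - 2 * k)

noncomputable def Sm (m : ℕ) : ℝ := ∑ k ∈ Finset.range ((m + 1) / 2 + 1), T m k

lemma T_nonneg (m k : ℕ) : 0 ≤ T m k := by
  unfold T
  positivity

lemma T_pos_zero (m : ℕ) : 0 < T m 0 := by
  have h1 : (0:ℝ) < ((m + 1 - 0 : ℕ) : ℝ) := by push_cast; positivity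
  have h2 : (0:ℝ) < ((m+1).choose 0 : ℝ) := by simp
  unfold T
  positivity

lemma Sm_pos (m : ℕ) : 0 < Sm m := by
  unfold Sm
  refine Finset.sum_pos' (fun k _ => T_nonneg m k)
    ⟨0, Finset.mem_range.2 (Nat.succ_pos _), T_pos_zero m⟩

lemma T_le (m k : ℕ) (hk : k ≤ (m+1)/2) : T (m+1) k ≤ (2 * π / 3) * T m k := by
  have h2k : 2 * k ≤ m + 1 := by omega
  obtain ⟨r, hr⟩ : ∃ r, m + 1 = 2 * k + r := ⟨m + 1 - 2 * k, by omega⟩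
  have hkr : 0 < k + r := by omega
  have e1 : m + 1 - k = k + r := by omega
  have e2 : m + 1 - 2 * k = r := by omega
  have e3 : m + 2 - k = k + r + 1 := by omega
  have e4 : m + 2 - 2 * k = r + 1 := by omega
  set C : ℝ := ((m+1).choose k : ℝ) with hCdef
  set A : ℝ := (π / 6) ^ ((m:ℤ) - 2 * k) with hAdef
  set F : ℝ := (r.factorial : ℝ) with hFdef
  have hC0 : 0 ≤ C := by positivity
  have hA0 : 0 < A := by positivity
  have hF0 : 0 < F := by positivity
  have echoose : ((m + 2).choose k) * (k + r + 1) = ((m+1).choose k) * (m + 2) := by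
    have h := Nat.choose_mul_succ_eq (m+1) k
    rw [show m+1+1 = m+2 by omega, e3] at h
    exact h.symm
  have hcc : ((m + 2).choose k : ℝ) * ((k:ℝ) + r + 1) = C * (2*(k:ℝ) + r + 1) := by
    have h1 : (((m + 2).choose k * (k + r + 1) : ℕ) : ℝ) = (((m+1).choose k * (m + 2) : ℕ) : ℝ) := by
      exact_mod_cast congrArg (Nat.cast (R := ℝ)) echoose
    push_cast at h1
    rw [hCdef, h1]
    have h2 : (m:ℝ) + 1 = 2*k + r := by exact_mod_cast congrArg (Nat.cast (R := ℝ)) hr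
    linear_combination (((m+1).choose k : ℝ)) * h2
  have hzpow : (π / 6 : ℝ) ^ (((m+1 : ℕ) : ℤ) - 2 * (k:ℤ)) = (π/6) * A := by
    have he : ((m+1 : ℕ) : ℤ) - 2 * (k:ℤ) = 1 + ((m:ℤ) - 2*k) := by push_cast; ring
    rw [hAdef, he, zpow_add₀ (by positivity : (π/6 : ℝ) ≠ 0), zpow_one]
  have Ts_eq : T (m+1) k = C * (2*(k:ℝ)+r+1) / (((r:ℝ)+1)*F) * ((π/6)*A) := by
    unfold T
    rw [show m+1+1 = m+2 by omega, e3, e4, hzpow, Nat.factorial_succ]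
    push_cast
    rw [hcc]
  have Tm_eq : T m k = C * ((k:ℝ)+r) / F * A := by
    unfold T
    rw [e1, e2, hFdef, hCdef, hAdef]
    push_cast
    ring
  have hnat : (2*(k:ℝ)+r+1) ≤ 4*((k:ℝ)+r)*((r:ℝ)+1) := by
    have hk0 : (0:ℝ) ≤ (k:ℝ) := by positivity
    have hr0 : (0:ℝ) ≤ (r:ℝ) := by positivity
    have hkr' : (1:ℝ) ≤ (k:ℝ) + r := by exact_mod_cast hkr
    nlinarith
  calc T (m+1) k = (C * (2*(k:ℝ)+r+1) * ((π/6)*A)) / (((r:ℝ)+1)*F) := by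
        rw [Ts_eq]; ring
    _ ≤ (C * (4*((k:ℝ)+r)*((r:ℝ)+1)) * ((π/6)*A)) / (((r:ℝ)+1)*F) := by
        gcongr
    _ = (2 * π / 3) * (C * ((k:ℝ)+r) / F * A) := by
        field_simp
        ring
    _ = (2 * π / 3) * T m k := by rw [Tm_eq]


lemma T_extra (p : ℕ) : T (2*p+1) (p+1) = (12/π) * T (2*p) p := by
  have h1 : 2*p+1+1 - (p+1) = p + 1 := by omega
  have h2 : 2*p+1+1 - 2*(p+1) = 0 := by omega
  have h3 : 2*p+1 - p = p + 1 := by omega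
  have h4 : 2*p+1 - 2*p = 1 := by omega
  have hch : (2*p+2).choose (p+1) * (p+1) = (2*p+2) * ((2*p+1).choose p) := by
    have h := Nat.add_one_mul_choose_eq (2*p+1) p
    simpa [Nat.succ_eq_add_one, show 2*p+1+1 = 2*p+2 by omega] using h.symm
  have hexp1 : ((2*p+1 : ℕ) : ℤ) - 2 * ((p+1 : ℕ) : ℤ) = -1 := by push_cast; ring
  have hexp2 : ((2*p : ℕ) : ℤ) - 2 * ((p : ℕ) : ℤ) = 0 := by push_cast; ring
  unfold T
  rw [h1, h2, h3, h4, hexp1, hexp2, zpow_neg_one, zpow_zero]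
  push_cast
  have hcc : ((2*p+2).choose (p+1) : ℝ) * ((p:ℝ)+1) = (2*(p:ℝ)+2) * ((2*p+1).choose p : ℝ) := by
    exact_mod_cast congrArg (Nat.cast (R := ℝ)) hch
  have hpi : (π:ℝ) ≠ 0 := Real.pi_ne_zero
  field_simp
  ring_nf
  ring_nf at hcc
  nlinarith [hcc]


lemma Sm_le (m : ℕ) : Sm (m+1) ≤ (2*π/3 + 12/π) * Sm m := by
  have hpi : (0:ℝ) < π := Real.pi_pos
  have hmain : ∑ k ∈ Finset.range ((m + 1) / 2 + 1), T (m+1) k ≤ (2*π/3) * Sm m := by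
    unfold Sm
    rw [Finset.mul_sum]
    exact Finset.sum_le_sum fun k hk => T_le m k (by
      have := Finset.mem_range.1 hk; omega)
  rcases Nat.even_or_odd m with ⟨p, hp⟩ | ⟨p, hp⟩
  · -- m = 2p even : extra term
    have hrange : (m + 1 + 1) / 2 + 1 = ((m + 1) / 2 + 1) + 1 := by omega
    have hm : m = 2*p := by omega
    have hp2 : (m+1)/2 = p := by omega
    unfold Sm
    rw [hrange, Finset.sum_range_succ]
    have hextra : T (m+1) ((m+1)/2 + 1) = (12/π) * T m p := by
      rw [hm, hp2] at *
      exact T_extra p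
    rw [hextra]
    have hTm : T m p ≤ Sm m := by
      unfold Sm
      refine Finset.single_le_sum (fun k _ => T_nonneg m k) ?_
      rw [Finset.mem_range]; omega
    have h12 : (0:ℝ) ≤ 12/π := by positivity
    have : (12/π) * T m p ≤ (12/π) * Sm m := by
      exact mul_le_mul_of_nonneg_left hTm h12
    calc (∑ k ∈ Finset.range ((m + 1) / 2 + 1), T (m+1) k) + (12/π) * T m p
        ≤ (2*π/3) * Sm m + (12/π) * Sm m := add_le_add hmain this
      _ = (2*π/3 + 12/π) * Sm m := by ring
  · -- m odd : same range
    have hrange : (m + 1 + 1) / 2 + 1 = (m + 1) / 2 + 1 := by omega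
    have hSm1 : Sm (m+1) = ∑ k ∈ Finset.range ((m + 1) / 2 + 1), T (m+1) k := by
      unfold Sm; rw [hrange]
    rw [hSm1]
    refine le_trans hmain ?_
    have h0 : (0:ℝ) ≤ (12/π) * Sm m := mul_nonneg (by positivity) (Sm_pos m).le
    nlinarith

lemma num_lt : 2*π/3 + 12/π < 4 * Real.sqrt 6 := by
  have h1 := Real.pi_gt_d6
  have h2 := Real.pi_lt_d2
  have hpi := Real.pi_pos
  have hs0 := Real.sqrt_nonneg 6
  have hs2 : (Real.sqrt 6)^2 = 6 := Real.sq_sqrt (by norm_num)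
  have hd : 12/π < 3.82 := by
    rw [div_lt_iff₀ hpi]
    nlinarith
  have hsl : (2.4:ℝ) ≤ Real.sqrt 6 := by nlinarith
  nlinarith

lemma Sm_lt (m : ℕ) : Sm (m+1) < 4 * Real.sqrt 6 * Sm m :=
  lt_of_le_of_lt (Sm_le m) (mul_lt_mul_of_pos_right num_lt (Sm_pos m))


lemma alt_summable {t : ℕ → ℝ} (ht : Summable t) (hpos : ∀ m, 0 < t m) :
    Summable (fun m => (-1:ℝ)^m * t m) := by
  apply Summable.of_norm
  refine ht.congr fun m => ?_
  rw [norm_mul, norm_pow, norm_neg, norm_one, one_pow, one_mul, Real.norm_eq_abs,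
    abs_of_pos (hpos m)]

lemma alt_tsum_pos {t : ℕ → ℝ} (ht : Summable t) (hpos : ∀ m, 0 < t m)
    (hdec : ∀ m, t (m+1) < t m) : 0 < ∑' m : ℕ, (-1:ℝ)^m * t m := by
  have hs : Summable (fun m => (-1:ℝ)^m * t m) := alt_summable ht hpos
  have hinj2 : Function.Injective (fun k : ℕ => 2*k) := fun a b h => by
    simpa using h
  have hinj2' : Function.Injective (fun k : ℕ => 2*k+1) := fun a b h => by
    simpa using h
  have he : Summable (fun k => (-1:ℝ)^(2*k) * t (2*k)) := hs.comp_injective hinj2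
  have ho : Summable (fun k => (-1:ℝ)^(2*k+1) * t (2*k+1)) := hs.comp_injective hinj2'
  have he2 : Summable (fun k => t (2*k)) := ht.comp_injective hinj2
  have ho2 : Summable (fun k => t (2*k+1)) := ht.comp_injective hinj2'
  rw [← tsum_even_add_odd (f := fun m => (-1:ℝ)^m * t m) he ho]
  have e1 : ∑' k, (-1:ℝ)^(2*k) * t (2*k) = ∑' k, t (2*k) := by
    refine tsum_congr fun k => ?_
    rw [pow_mul]; norm_num
  have e2 : ∑' k, (-1:ℝ)^(2*k+1) * t (2*k+1) = - ∑' k, t (2*k+1) := by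
    rw [← tsum_neg]
    refine tsum_congr fun k => ?_
    rw [pow_succ, pow_mul]; norm_num
  rw [e1, e2, ← sub_eq_add_neg, ← he2.tsum_sub ho2]
  exact Summable.tsum_pos (he2.sub ho2) (fun k => sub_nonneg.2 (hdec (2*k)).le) 0
    (sub_pos.2 (hdec 0))

lemma alt_tsum_lt {t : ℕ → ℝ} (ht : Summable t) (hpos : ∀ m, 0 < t m)
    (hdec : ∀ m, t (m+1) < t m) : ∑' m : ℕ, (-1:ℝ)^m * t m < t 0 := by
  have hs : Summable (fun m => (-1:ℝ)^m * t m) := alt_summable ht hpos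
  have ht1 : Summable (fun m => t (m+1)) := (summable_nat_add_iff 1).2 ht
  have hs1 : Summable (fun m => (-1:ℝ)^(m+1) * t (m+1)) :=
    (summable_nat_add_iff 1).2 hs
  rw [tsum_eq_zero_add' (f := fun m => (-1:ℝ)^m * t m) hs1]
  simp only [pow_zero, one_mul]
  have e : ∑' b, (-1:ℝ)^(b+1) * t (b+1) = - ∑' b, (-1:ℝ)^b * t (b+1) := by
    rw [← tsum_neg]
    refine tsum_congr fun b => ?_
    rw [pow_succ]; ring
  rw [e]
  have hp := alt_tsum_pos ht1 (fun m => hpos _) (fun m => hdec _)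
  linarith


theorem stmt5 (n N : ℕ) (hn : 1 ≤ n) :
    0 < (-1 : ℝ) ^ N * ((∑' m : ℕ, c m / (n : ℝ) ^ ((m : ℝ) / 2)) -
        ∑ m ∈ Finset.range N, c m / (n : ℝ) ^ ((m : ℝ) / 2)) ∧
      (-1 : ℝ) ^ N * ((∑' m : ℕ, c m / (n : ℝ) ^ ((m : ℝ) / 2)) -
        ∑ m ∈ Finset.range N, c m / (n : ℝ) ^ ((m : ℝ) / 2)) <
        (-1 : ℝ) ^ N * (c N / (n : ℝ) ^ ((N : ℝ) / 2)) := by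
  have hn1 : (1:ℝ) ≤ (n:ℝ) := by exact_mod_cast hn
  have hsn : (1:ℝ) ≤ Real.sqrt n := by
    rw [show (1:ℝ) = Real.sqrt 1 from Real.sqrt_one.symm]
    exact Real.sqrt_le_sqrt hn1
  have hsn0 : (0:ℝ) < Real.sqrt n := lt_of_lt_of_le one_pos hsn
  have hs6 : (0:ℝ) < Real.sqrt 6 := Real.sqrt_pos.2 (by norm_num)
  set D : ℝ := 4 * Real.sqrt 6 * Real.sqrt n with hD
  have hD0 : (0:ℝ) < D := by rw [hD]; positivity
  have hD46 : 4 * Real.sqrt 6 ≤ D := by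
    rw [hD]; nlinarith [hs6, hsn]
  set t : ℕ → ℝ := fun m => Sm m / D^m with htdef
  have htpos : ∀ m, 0 < t m := fun m => div_pos (Sm_pos m) (pow_pos hD0 m)
  set q : ℝ := (2*π/3 + 12/π) / (4*Real.sqrt 6) with hq
  have hpi := Real.pi_pos
  have hnum0 : (0:ℝ) < 2*π/3 + 12/π := by positivity
  have hq1 : q < 1 := (div_lt_one (by positivity)).2 num_lt
  have hratio : ∀ m, t (m+1) ≤ q * t m := by
    intro m
    calc t (m+1) = Sm (m+1) / (D^m * D) := by
          rw [htdef]; simp [pow_succ]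
      _ ≤ ((2*π/3 + 12/π) * Sm m) / (D^m * (4*Real.sqrt 6)) := by
          refine div_le_div₀ (mul_nonneg hnum0.le (Sm_pos m).le) (Sm_le m)
            (mul_pos (pow_pos hD0 m) (by positivity))
            (mul_le_mul_of_nonneg_left hD46 (pow_pos hD0 m).le)
      _ = q * t m := by
          rw [hq, htdef]
          field_simp
  have hsum_t : Summable t := by
    apply summable_of_ratio_norm_eventually_le hq1
    filter_upwards with m
    rw [Real.norm_eq_abs, Real.norm_eq_abs, abs_of_pos (htpos _), abs_of_pos (htpos _)]
    exact hratio m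
  have hdec : ∀ m, t (m+1) < t m := fun m =>
    lt_of_le_of_lt (hratio m) (by nlinarith [htpos m, hq1])
  have hnp : ∀ m : ℕ, (n:ℝ) ^ ((m:ℝ)/2) = (Real.sqrt n)^m := by
    intro m
    rw [show ((m:ℝ)/2) = (1/2) * (m:ℝ) by ring, Real.rpow_mul (by positivity : (0:ℝ) ≤ n),
      Real.rpow_natCast, ← Real.sqrt_eq_rpow]
  have hg : ∀ m : ℕ, c m / (n:ℝ)^((m:ℝ)/2) = (-1:ℝ)^m * t m := by
    intro m
    have hc : c m = ((-1:ℝ)^m / (4*Real.sqrt 6)^m) * Sm m := rfl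
    rw [hc, hnp m, htdef, hD, mul_pow]
    have h1 : ((4:ℝ)*Real.sqrt 6)^m ≠ 0 := by positivity
    have h2 : (Real.sqrt n)^m ≠ 0 := by positivity
    field_simp
    ring
  have hsum_g : Summable (fun m : ℕ => c m / (n:ℝ)^((m:ℝ)/2)) := by
    refine Summable.of_norm ?_
    refine hsum_t.congr fun m => ?_
    rw [hg m, norm_mul, norm_pow, norm_neg, norm_one, one_pow, one_mul, Real.norm_eq_abs,
      abs_of_pos (htpos m)]
  have Hteq : (-1:ℝ)^N * ((∑' m : ℕ, c m / (n : ℝ) ^ ((m : ℝ) / 2)) -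
        ∑ m ∈ Finset.range N, c m / (n : ℝ) ^ ((m : ℝ) / 2)) =
      ∑' i : ℕ, (-1:ℝ)^i * t (i+N) := by
    rw [← hsum_g.sum_add_tsum_nat_add N, add_sub_cancel_left, ← tsum_mul_left]
    refine tsum_congr fun i => ?_
    rw [hg (i+N), ← mul_assoc, ← pow_add, show N + (i+N) = 2*N + i by omega,
      pow_add, pow_mul]
    norm_num
  have hsum_t' : Summable (fun i => t (i+N)) := (summable_nat_add_iff N).2 hsum_t
  have hpos' : ∀ m, 0 < t (m+N) := fun m => htpos _
  have hdec' : ∀ m, t (m+1+N) < t (m+N) := fun m => by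
    have := hdec (m+N); rwa [show m+N+1 = m+1+N by omega] at this
  constructor
  · rw [Hteq]
    exact alt_tsum_pos hsum_t' hpos' hdec'
  · rw [Hteq]
    have hlt := alt_tsum_lt hsum_t' hpos' hdec'
    have hrhs : (-1:ℝ)^N * (c N / (n:ℝ)^((N:ℝ)/2)) = t N := by
      rw [hg N, ← mul_assoc, ← pow_add, ← two_mul, pow_mul]
      norm_num
    rw [hrhs]
    simpa using hlt
end

section
/- For every nonnegative integer m, one has |c_{2m+1}| ≤ (6√2/π^{3/2}) · cosh(π/6) · (√(2m+2)/(√24)^{2m+1}) · √(1 − 1/(4m+5)). -/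
open Real Finset Filter Topology

open scoped Nat

lemma wallis_sharp (N : ℕ) :
    π / 2 ≤ Real.Wallis.W N * ((4 * N + 2) / (4 * N + 1)) := by
  set f : ℕ → ℝ := fun n => Real.Wallis.W n * ((4 * n + 2) / (4 * n + 1)) with hf
  have hanti : Antitone f := by
    apply antitone_nat_of_succ_le
    intro n
    have hW := Real.Wallis.W_pos n
    simp only [hf, Real.Wallis.W_succ]
    push_cast
    rw [mul_assoc]
    refine mul_le_mul_of_nonneg_left ?_ hW.le
    have hn : (0:ℝ) ≤ (n:ℝ) := Nat.cast_nonneg n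
    rw [div_mul_div_comm, div_mul_div_comm, div_le_div_iff₀ (by positivity) (by positivity)]
    nlinarith [hn, sq_nonneg ((n:ℝ))]
  have h1 : Tendsto (fun n : ℕ => ((4 * (n:ℝ) + 2) / (4 * n + 1))) atTop (𝓝 1) := by
    have hA : Tendsto (fun n : ℕ => (4 * (n:ℝ) + 1)) atTop atTop := by
      apply tendsto_atTop_add_const_right
      exact (tendsto_natCast_atTop_atTop (R := ℝ)).const_mul_atTop (by norm_num)
    have heq : (fun n : ℕ => ((4 * (n:ℝ) + 2) / (4 * n + 1)))
        = fun n : ℕ => 1 + (4 * (n:ℝ) + 1)⁻¹ := by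
      funext n
      have : (4 * (n:ℝ) + 1) ≠ 0 := by positivity
      field_simp
      ring
    rw [heq]
    simpa using tendsto_const_nhds.add hA.inv_tendsto_atTop
  have htend : Tendsto f atTop (𝓝 (π / 2)) := by
    simpa using Real.Wallis.tendsto_W_nhds_pi_div_two.mul h1
  exact hanti.le_of_tendsto htend N

lemma central_binom_sharp (N : ℕ) :
    ((2 * N).choose N : ℝ) * Real.sqrt (π * (4 * N + 1)) ≤ 2 * 4 ^ N := by
  set C : ℝ := ((2 * N).choose N : ℝ) with hCdef
  have hCpos : 0 < C := by
    have := Nat.choose_pos (show N ≤ 2 * N by omega)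
    rw [hCdef]; exact_mod_cast this
  have hchN : (2 * N).choose N * N ! * N ! = (2 * N)! := by
    have h := Nat.choose_mul_factorial_mul_factorial (show N ≤ 2 * N by omega)
    rwa [show 2 * N - N = N by omega] at h
  have hch : ((2 * N)! : ℝ) = C * (N ! : ℝ) * (N ! : ℝ) := by
    rw [hCdef]; exact_mod_cast hchN.symm
  have hfac : Real.Wallis.W N * (C ^ 2 * (2 * N + 1)) = 16 ^ N := by
    rw [Real.Wallis.W_eq_factorial_ratio, hch]
    have hN : (N ! : ℝ) ≠ 0 := by positivity
    have h2 : (2 * (N:ℝ) + 1) ≠ 0 := by positivity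
    have h16 : (2:ℝ) ^ (4 * N) = 16 ^ N := by
      rw [show (16:ℝ) = 2 ^ 4 by norm_num, ← pow_mul]
    field_simp
    rw [← h16]
  have hWk := wallis_sharp N
  have h2N : (0:ℝ) < 2 * N + 1 := by positivity
  have h4N : (0:ℝ) < 4 * N + 1 := by positivity
  have key : π * (4 * N + 1) * C ^ 2 ≤ 4 * 16 ^ N := by
    have hWk' : π / 2 * (4 * N + 1) ≤ Real.Wallis.W N * (4 * N + 2) := by
      rw [← mul_div_assoc] at hWk
      exact (le_div_iff₀ h4N).mp hWk
    have h5 : π / 2 * (4 * N + 1) * (C ^ 2 * (2 * N + 1))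
        ≤ Real.Wallis.W N * (4 * N + 2) * (C ^ 2 * (2 * N + 1)) :=
      mul_le_mul_of_nonneg_right hWk' (by positivity)
    have h6 : Real.Wallis.W N * (4 * N + 2) * (C ^ 2 * (2 * N + 1))
        = (4 * N + 2) * 16 ^ N := by
      linear_combination (4 * (N:ℝ) + 2) * hfac
    have h7 : π * (4 * N + 1) * C ^ 2 * (2 * N + 1) ≤ 4 * 16 ^ N * (2 * N + 1) := by
      nlinarith [h5, h6]
    exact le_of_mul_le_mul_right h7 h2N
  have hsq : (C * Real.sqrt (π * (4 * N + 1))) ^ 2 ≤ (2 * 4 ^ N) ^ 2 := by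
    rw [mul_pow, Real.sq_sqrt (by positivity)]
    have : ((2:ℝ) * 4 ^ N) ^ 2 = 4 * 16 ^ N := by
      rw [mul_pow, ← pow_mul, mul_comm N 2, pow_mul]
      norm_num
    rw [this]
    nlinarith [key]
  have hl : 0 ≤ C * Real.sqrt (π * (4 * N + 1)) := by positivity
  have hr : (0:ℝ) ≤ 2 * 4 ^ N := by positivity
  exact (pow_le_pow_iff_left₀ hl hr (by norm_num)).mp hsq

theorem stmt10 (m : ℕ) :
    |c (2 * m + 1)| ≤ 6 * Real.sqrt 2 / π ^ ((3 : ℝ) / 2) * Real.cosh (π / 6) *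
      (Real.sqrt (2 * m + 2) / Real.sqrt 24 ^ (2 * m + 1)) *
        Real.sqrt (1 - 1 / (4 * m + 5)) := by
  have hπ : (0:ℝ) < π := Real.pi_pos
  have hx : (0:ℝ) < π / 6 := by positivity
  have hrange : (2 * m + 1 + 1) / 2 + 1 = m + 2 := by omega
  set Cm : ℝ := ((2 * m + 1).choose m : ℝ) with hCm
  set K : ℝ := ((2 * m + 2 : ℕ) : ℝ) * Cm * (6 / π) with hK
  -- termwise bound
  have hterm : ∀ k ∈ Finset.range (m + 2),
      ((2 * m + 1 + 1).choose k : ℝ) * ((2 * m + 1 + 1 - k : ℕ) : ℝ) /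
          ((2 * m + 1 + 1 - 2 * k).factorial : ℝ) * (π / 6) ^ (((2 * m + 1 : ℕ) : ℤ) - 2 * (k : ℤ))
        ≤ K * ((π / 6) ^ (2 * (m + 1 - k)) / ((2 * (m + 1 - k)).factorial : ℝ)) := by
    intro k hk
    have hk' : k ≤ m + 1 := by
      have := Finset.mem_range.mp hk; omega
    have hid : (2 * m + 1 + 1).choose k * (2 * m + 1 + 1 - k)
        = (2 * m + 2) * ((2 * m + 1).choose k) := by
      calc (2 * m + 1 + 1).choose k * (2 * m + 1 + 1 - k)
          = (2 * m + 1 + 1).choose (k + 1) * (k + 1) := (Nat.choose_succ_right_eq _ _).symm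
        _ = (2 * m + 1 + 1) * ((2 * m + 1).choose k) := (Nat.add_one_mul_choose_eq (2 * m + 1) k).symm
        _ = (2 * m + 2) * ((2 * m + 1).choose k) := by ring_nf
    have hchoose : (2 * m + 1).choose k ≤ (2 * m + 1).choose m := by
      have h := Nat.choose_le_middle k (2 * m + 1)
      rwa [show (2 * m + 1) / 2 = m by omega] at h
    have hABn : (2 * m + 1 + 1).choose k * (2 * m + 1 + 1 - k)
        ≤ (2 * m + 2) * ((2 * m + 1).choose m) := by
      rw [hid]; exact Nat.mul_le_mul_left _ hchoose
    have hAB : ((2 * m + 1 + 1).choose k : ℝ) * ((2 * m + 1 + 1 - k : ℕ) : ℝ)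
        ≤ ((2 * m + 2 : ℕ) : ℝ) * Cm := by
      rw [hCm]; exact_mod_cast hABn
    have he : ((2 * m + 1 : ℕ) : ℤ) - 2 * (k : ℤ) = ((2 * (m + 1 - k) : ℕ) : ℤ) - 1 := by
      omega
    have hzp : (π / 6 : ℝ) ^ (((2 * m + 1 : ℕ) : ℤ) - 2 * (k : ℤ))
        = (π / 6) ^ (2 * (m + 1 - k)) * (6 / π) := by
      rw [he, zpow_sub₀ (ne_of_gt hx), zpow_natCast, zpow_one, div_eq_mul_inv, inv_div]
    have hf : 2 * m + 1 + 1 - 2 * k = 2 * (m + 1 - k) := by omega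
    have hQ : (0:ℝ) ≤ (π / 6) ^ (2 * (m + 1 - k)) * (6 / π) / ((2 * (m + 1 - k)).factorial : ℝ) := by
      positivity
    calc ((2 * m + 1 + 1).choose k : ℝ) * ((2 * m + 1 + 1 - k : ℕ) : ℝ) /
          ((2 * m + 1 + 1 - 2 * k).factorial : ℝ) * (π / 6) ^ (((2 * m + 1 : ℕ) : ℤ) - 2 * (k : ℤ))
        = (((2 * m + 1 + 1).choose k : ℝ) * ((2 * m + 1 + 1 - k : ℕ) : ℝ)) *
            ((π / 6) ^ (2 * (m + 1 - k)) * (6 / π) / ((2 * (m + 1 - k)).factorial : ℝ)) := by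
          rw [hzp, hf]; ring
      _ ≤ (((2 * m + 2 : ℕ) : ℝ) * Cm) *
            ((π / 6) ^ (2 * (m + 1 - k)) * (6 / π) / ((2 * (m + 1 - k)).factorial : ℝ)) :=
          mul_le_mul_of_nonneg_right hAB hQ
      _ = K * ((π / 6) ^ (2 * (m + 1 - k)) / ((2 * (m + 1 - k)).factorial : ℝ)) := by
          rw [hK]; ring
  -- sum bound
  have hreflect : ∑ k ∈ Finset.range (m + 2),
      ((π / 6) ^ (2 * (m + 1 - k)) / ((2 * (m + 1 - k)).factorial : ℝ))
      = ∑ i ∈ Finset.range (m + 2), ((π / 6) ^ (2 * i) / ((2 * i).factorial : ℝ)) := by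
    have h := Finset.sum_range_reflect
      (fun i => ((π / 6 : ℝ) ^ (2 * i) / ((2 * i).factorial : ℝ))) (m + 2)
    simp only [show ∀ k, m + 2 - 1 - k = m + 1 - k from fun k => by omega] at h
    exact h
  have hcosh : ∑ i ∈ Finset.range (m + 2), ((π / 6) ^ (2 * i) / ((2 * i).factorial : ℝ))
      ≤ Real.cosh (π / 6) := by
    exact sum_le_hasSum (Finset.range (m + 2)) (fun i _ => by positivity) (Real.hasSum_cosh (π / 6))
  have hKpos : 0 < K := by
    rw [hK, hCm]
    have : 0 < (2 * m + 1).choose m := Nat.choose_pos (by omega)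
    positivity
  have hsum : ∑ k ∈ Finset.range (m + 2),
      ((2 * m + 1 + 1).choose k : ℝ) * ((2 * m + 1 + 1 - k : ℕ) : ℝ) /
          ((2 * m + 1 + 1 - 2 * k).factorial : ℝ) * (π / 6) ^ (((2 * m + 1 : ℕ) : ℤ) - 2 * (k : ℤ))
      ≤ K * Real.cosh (π / 6) := by
    calc _ ≤ ∑ k ∈ Finset.range (m + 2),
          K * ((π / 6) ^ (2 * (m + 1 - k)) / ((2 * (m + 1 - k)).factorial : ℝ)) :=
        Finset.sum_le_sum hterm
      _ = K * ∑ k ∈ Finset.range (m + 2),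
          ((π / 6) ^ (2 * (m + 1 - k)) / ((2 * (m + 1 - k)).factorial : ℝ)) := by
        rw [Finset.mul_sum]
      _ ≤ K * Real.cosh (π / 6) := by
        rw [hreflect]
        exact mul_le_mul_of_nonneg_left hcosh hKpos.le
  -- absolute value
  have hS0 : 0 ≤ ∑ k ∈ Finset.range (m + 2),
      ((2 * m + 1 + 1).choose k : ℝ) * ((2 * m + 1 + 1 - k : ℕ) : ℝ) /
          ((2 * m + 1 + 1 - 2 * k).factorial : ℝ) *
            (π / 6) ^ (((2 * m + 1 : ℕ) : ℤ) - 2 * (k : ℤ)) :=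
    Finset.sum_nonneg fun k _ => by positivity
  have h46pos : (0:ℝ) < (4 * Real.sqrt 6) ^ (2 * m + 1) := by positivity
  have habs : |c (2 * m + 1)| = (∑ k ∈ Finset.range (m + 2),
      ((2 * m + 1 + 1).choose k : ℝ) * ((2 * m + 1 + 1 - k : ℕ) : ℝ) /
          ((2 * m + 1 + 1 - 2 * k).factorial : ℝ) *
            (π / 6) ^ (((2 * m + 1 : ℕ) : ℤ) - 2 * (k : ℤ))) /
        (4 * Real.sqrt 6) ^ (2 * m + 1) := by
    simp only [c, hrange]
    rw [abs_mul, abs_div, abs_pow, abs_neg, abs_one, one_pow, abs_of_nonneg hS0,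
      abs_of_pos h46pos, one_div, inv_mul_eq_div]
  -- key central binomial
  have key2 : Cm * Real.sqrt (π * (4 * (m:ℝ) + 5)) ≤ 4 ^ (m + 1) := by
    have hcb := central_binom_sharp (m + 1)
    have hcc : (2 * (m + 1)).choose (m + 1) = 2 * ((2 * m + 1).choose m) := by
      have hp : (2 * m + 1 + 1).choose (m + 1)
          = (2 * m + 1).choose m + (2 * m + 1).choose (m + 1) := Nat.choose_succ_succ (2 * m + 1) m
      have hsym : (2 * m + 1).choose m = (2 * m + 1).choose (m + 1) := by
        have h := Nat.choose_symm (show m + 1 ≤ 2 * m + 1 by omega)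
        rwa [show 2 * m + 1 - (m + 1) = m by omega] at h
      rw [show 2 * (m + 1) = 2 * m + 1 + 1 by ring, hp]
      omega
    rw [hcc] at hcb
    push_cast at hcb
    rw [show π * (4 * ((m:ℝ) + 1) + 1) = π * (4 * (m:ℝ) + 5) by ring] at hcb
    rw [hCm]
    push_cast
    linarith
  have hsqpos : (0:ℝ) < Real.sqrt (π * (4 * (m:ℝ) + 5)) := by
    apply Real.sqrt_pos.mpr; positivity
  have key2' : Cm ≤ 4 ^ (m + 1) / Real.sqrt (π * (4 * (m:ℝ) + 5)) := by
    rw [le_div_iff₀ hsqpos]; exact key2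
  -- final equality
  have h24 : Real.sqrt 24 = 2 * Real.sqrt 6 := by
    rw [show (24:ℝ) = 4 * 6 by norm_num, Real.sqrt_mul (by norm_num : (0:ℝ) ≤ 4),
      show Real.sqrt 4 = 2 by
        rw [show (4:ℝ) = 2 ^ 2 by norm_num, Real.sqrt_sq (by norm_num : (0:ℝ) ≤ 2)]]
  have h46 : (4 * Real.sqrt 6) ^ (2 * m + 1) = 2 ^ (2 * m + 1) * Real.sqrt 24 ^ (2 * m + 1) := by
    rw [← mul_pow, h24]; ring_nf
  have hpow32 : π ^ ((3:ℝ) / 2) = π * Real.sqrt π := by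
    rw [show (3:ℝ) / 2 = 1 + (1/2 : ℝ) by norm_num, Real.rpow_add hπ, Real.rpow_one,
      ← Real.sqrt_eq_rpow]
  have h4pow : (4:ℝ) ^ (m + 1) = 2 * 2 ^ (2 * m + 1) := by
    rw [show (4:ℝ) = 2 ^ 2 by norm_num, ← pow_mul, show 2 * (m + 1) = 2 * m + 1 + 1 by ring,
      pow_succ]
    ring
  have hEq : 6 * Real.sqrt 2 / π ^ ((3 : ℝ) / 2) * Real.cosh (π / 6) *
      (Real.sqrt (2 * (m:ℝ) + 2) / Real.sqrt 24 ^ (2 * m + 1)) *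
        Real.sqrt (1 - 1 / (4 * (m:ℝ) + 5))
      = (4 ^ (m + 1) / Real.sqrt (π * (4 * (m:ℝ) + 5))) *
          (((2 * m + 2 : ℕ) : ℝ) * (6 / π) * Real.cosh (π / 6) /
            (4 * Real.sqrt 6) ^ (2 * m + 1)) := by
    have h1m : (1:ℝ) - 1 / (4 * (m:ℝ) + 5) = (2 * (2 * (m:ℝ) + 2)) / (4 * (m:ℝ) + 5) := by
      have h5 : (4 * (m:ℝ) + 5) ≠ 0 := by positivity
      field_simp
      ring
    rw [hpow32, h46, h4pow, h1m, Real.sqrt_div (by positivity) _,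
      Real.sqrt_mul (by norm_num : (0:ℝ) ≤ 2), Real.sqrt_mul hπ.le]
    have hc : ((2 * m + 2 : ℕ) : ℝ) = 2 * (m:ℝ) + 2 := by push_cast; ring
    have hπs : Real.sqrt π ≠ 0 := by positivity
    have h45 : Real.sqrt (4 * (m:ℝ) + 5) ≠ 0 := by positivity
    have h24n : Real.sqrt 24 ^ (2 * m + 1) ≠ 0 := by positivity
    have h2n : (2:ℝ) ^ (2 * m + 1) ≠ 0 := by positivity
    rw [hc]
    field_simp
    ring_nf
    rw [Real.sq_sqrt (by norm_num : (0:ℝ) ≤ 2),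
      Real.sq_sqrt (by positivity : (0:ℝ) ≤ 2 + (m:ℝ) * 2)]
    ring
  calc |c (2 * m + 1)| = _ := habs
    _ ≤ K * Real.cosh (π / 6) / (4 * Real.sqrt 6) ^ (2 * m + 1) :=
        (div_le_div_iff_of_pos_right h46pos).mpr hsum
    _ = Cm * (((2 * m + 2 : ℕ) : ℝ) * (6 / π) * Real.cosh (π / 6) /
          (4 * Real.sqrt 6) ^ (2 * m + 1)) := by rw [hK]; ring
    _ ≤ (4 ^ (m + 1) / Real.sqrt (π * (4 * (m:ℝ) + 5))) *
          (((2 * m + 2 : ℕ) : ℝ) * (6 / π) * Real.cosh (π / 6) /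
            (4 * Real.sqrt 6) ^ (2 * m + 1)) :=
        mul_le_mul_of_nonneg_right key2' (by positivity)
    _ = _ := hEq.symm
end

section
/- As N → +∞, the even-indexed coefficients satisfy the asymptotic equivalence c_{2N} ~ (6√2/π^{3/2}) · sinh(π/6) · √(2N+1)/(√24)^{2N}; that is, the quotient c_{2N} · (√24)^{2N} / ((6√2/π^{3/2}) · sinh(π/6) · √(2N+1)) tends to 1. -/
open Real Finset Filter Topology

lemma stirling_ratio (n : ℕ) (hn : 1 ≤ n) :
    ((2*n).choose n : ℝ) * Real.sqrt n / 4 ^ n =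
      Stirling.stirlingSeq (2*n) / (Stirling.stirlingSeq n)^2 := by
  have hfact : (((2*n).factorial : ℕ) : ℝ) = ((2*n).choose n : ℝ) * n.factorial * n.factorial := by
    rw [← Nat.choose_mul_factorial_mul_factorial (by omega : n ≤ 2*n), show 2*n-n = n by omega]
    push_cast; ring
  have hn' : (0:ℝ) < n := by exact_mod_cast hn
  have hs : Real.sqrt (2*(2*n:ℕ)) = 2 * Real.sqrt n := by
    push_cast
    rw [show (2:ℝ)*(2*n) = 4*n by ring, Real.sqrt_mul (by norm_num) n,
      show (4:ℝ) = 2^2 by norm_num, Real.sqrt_sq (by norm_num)]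
  have hs2 : Real.sqrt (2*(n:ℕ)) = Real.sqrt 2 * Real.sqrt n := by
    rw [Real.sqrt_mul (by norm_num)]
  unfold Stirling.stirlingSeq
  set P := ((n:ℝ)/Real.exp 1)^n with hPdef
  have hP : (((2*n:ℕ):ℝ)/Real.exp 1)^(2*n) = 4^n * P^2 := by
    rw [hPdef]
    push_cast
    rw [show (2*(n:ℝ))/Real.exp 1 = 2 * ((n:ℝ)/Real.exp 1) by ring, mul_pow, pow_mul,
      mul_comm 2 n, pow_mul]
    norm_num
  have hPpos : (0:ℝ) < P := by rw [hPdef]; positivity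
  clear_value P
  rw [hfact, hs, hs2, hP]
  have h4 : (0:ℝ) < 4^n := by positivity
  have hsn : (0:ℝ) < Real.sqrt n := Real.sqrt_pos.mpr hn'
  have hfac : (0:ℝ) < (n.factorial : ℝ) := by exact_mod_cast n.factorial_pos
  have h2 : Real.sqrt 2 * Real.sqrt 2 = 2 := Real.mul_self_sqrt (by norm_num)
  field_simp
  rw [Real.sq_sqrt (by norm_num : (0:ℝ) ≤ 2)]

lemma centralBinom_tendsto :
    Tendsto (fun n : ℕ => ((2*n).choose n : ℝ) * Real.sqrt n / 4 ^ n) atTop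
      (𝓝 (1 / Real.sqrt π)) := by
  have h2n : Tendsto (fun n : ℕ => 2*n) atTop atTop :=
    tendsto_atTop_mono (fun n => by simp; omega) tendsto_id
  have ha : Tendsto (fun n : ℕ => Stirling.stirlingSeq (2*n)) atTop (𝓝 (Real.sqrt π)) :=
    Stirling.tendsto_stirlingSeq_sqrt_pi.comp h2n
  have hb : Tendsto (fun n : ℕ => (Stirling.stirlingSeq n)^2) atTop (𝓝 ((Real.sqrt π)^2)) :=
    Stirling.tendsto_stirlingSeq_sqrt_pi.pow 2
  have hπ : Real.sqrt π ≠ 0 := ne_of_gt (Real.sqrt_pos.mpr Real.pi_pos)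
  have hlim : Tendsto (fun n : ℕ => Stirling.stirlingSeq (2*n) / (Stirling.stirlingSeq n)^2)
      atTop (𝓝 (Real.sqrt π / (Real.sqrt π)^2)) := ha.div hb (by positivity)
  rw [show Real.sqrt π / (Real.sqrt π)^2 = 1 / Real.sqrt π by rw [sq]; field_simp] at hlim
  apply hlim.congr'
  filter_upwards [eventually_ge_atTop 1] with n hn
  exact (stirling_ratio n hn).symm

lemma frac_tendsto (j : ℕ) :
    Tendsto (fun N : ℕ => ((N:ℝ) - j)/((N:ℝ) + (j+1))) atTop (𝓝 1) := by
  have h1 : Tendsto (fun N : ℕ => (j:ℝ) / N) atTop (𝓝 0) :=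
    tendsto_const_div_atTop_nhds_zero_nat _
  have h2 : Tendsto (fun N : ℕ => ((j:ℝ)+1) / N) atTop (𝓝 0) :=
    tendsto_const_div_atTop_nhds_zero_nat _
  have h3 : Tendsto (fun N : ℕ => (1 - (j:ℝ)/N)/(1 + ((j:ℝ)+1)/N)) atTop
      (𝓝 ((1-0)/(1+0))) :=
    (tendsto_const_nhds.sub h1).div (tendsto_const_nhds.add h2) (by norm_num)
  norm_num at h3
  apply h3.congr'
  filter_upwards [eventually_ge_atTop 1] with N hN
  have hN' : (0:ℝ) < N := by exact_mod_cast hN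
  have hd : (0:ℝ) < (N:ℝ) + ((j:ℝ)+1) := by positivity
  field_simp

lemma ratio_tendsto (j : ℕ) :
    Tendsto (fun N : ℕ => ((2*N).choose (N - j) : ℝ) / ((2*N).choose N : ℝ)) atTop (𝓝 1) := by
  induction j with
  | zero =>
    have h : ∀ N : ℕ, ((2*N).choose (N-0):ℝ)/((2*N).choose N:ℝ) = 1 := fun N => by
      rw [Nat.sub_zero, div_self]
      exact_mod_cast (Nat.choose_pos (by omega : N ≤ 2*N)).ne'
    exact tendsto_const_nhds.congr (fun N => (h N).symm)
  | succ j ih =>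
    have h := ih.mul (frac_tendsto j)
    rw [mul_one] at h
    apply h.congr'
    filter_upwards [eventually_ge_atTop (j+1)] with N hN
    have hnat : (2*N).choose (N-j) * (N - j) = (2*N).choose (N-(j+1)) * (N+j+1) := by
      have h := Nat.choose_succ_right_eq (2*N) (N-(j+1))
      rw [show N-(j+1)+1 = N-j by omega] at h
      rw [h, show 2*N - (N-(j+1)) = N+j+1 by omega]
    have hd : (0:ℝ) < (N:ℝ) + ((j:ℝ)+1) := by positivity
    have hc : ((2*N).choose (N-(j+1)) : ℝ) =
        ((2*N).choose (N-j) : ℝ) * (((N:ℝ)-j)/((N:ℝ)+(j+1))) := by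
      have : (((2*N).choose (N-j) : ℕ):ℝ) * (((N:ℕ):ℝ) - (j:ℝ)) =
          (((2*N).choose (N-(j+1)) : ℕ):ℝ) * ((N:ℝ)+(j:ℝ)+1) := by
        have := congrArg (fun t : ℕ => (t:ℝ)) hnat
        push_cast [Nat.cast_sub (by omega : j ≤ N)] at this
        linarith [this]
      field_simp
      linarith [this]
    rw [hc]
    ring

lemma g_hasSum : HasSum (fun j : ℕ => (π/6)^(2*j) / ((2*j+1).factorial : ℝ))
    ((6/π) * Real.sinh (π/6)) := by
  have h := (Real.hasSum_sinh (π/6)).mul_left (6/π)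
  convert h using 2 with j
  · rfl
  have hπ : π ≠ 0 := Real.pi_ne_zero
  rw [pow_succ]
  field_simp

lemma B_tendsto :
    Tendsto (fun N : ℕ => ∑ j ∈ range (N+1),
        (((2*N).choose (N-j):ℝ)/((2*N).choose N)) * ((π/6)^(2*j) / ((2*j+1).factorial:ℝ)))
      atTop (𝓝 ((6/π) * Real.sinh (π/6))) := by
  set g : ℕ → ℝ := fun j => (π/6)^(2*j) / ((2*j+1).factorial:ℝ) with hg
  set f : ℕ → ℕ → ℝ := fun N j =>
    if j ≤ N then (((2*N).choose (N-j):ℝ)/((2*N).choose N)) * g j else 0 with hf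
  have hgpos : ∀ j, 0 < g j := fun j => by
    rw [hg]
    have := Real.pi_pos
    positivity
  have hsum : Summable g := g_hasSum.summable
  have htsumf : ∀ N, ∑' j, f N j = ∑ j ∈ range (N+1),
      (((2*N).choose (N-j):ℝ)/((2*N).choose N)) * ((π/6)^(2*j) / ((2*j+1).factorial:ℝ)) := by
    intro N
    rw [tsum_eq_sum (s := range (N+1)) (fun j hj => by
      rw [hf]; simp only; rw [if_neg]; simp at hj; omega)]
    exact Finset.sum_congr rfl fun j hj => by
      rw [hf]; simp only; rw [if_pos (by simp at hj; omega)]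
  have hpt : ∀ j, Tendsto (fun N => f N j) atTop (𝓝 (g j)) := by
    intro j
    have h := (ratio_tendsto j).mul_const (g j)
    rw [one_mul] at h
    apply h.congr'
    filter_upwards [eventually_ge_atTop j] with N hN
    rw [hf]; simp only; rw [if_pos hN]
  have hb : ∀ᶠ N in atTop, ∀ j, ‖f N j‖ ≤ g j := by
    apply Filter.Eventually.of_forall
    intro N j
    by_cases h : j ≤ N
    · rw [hf]; simp only; rw [if_pos h]
      have hCpos : (0:ℝ) < ((2*N).choose N:ℝ) := by
        exact_mod_cast Nat.choose_pos (by omega : N ≤ 2*N)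
      have hle : ((2*N).choose (N-j):ℝ) ≤ ((2*N).choose N:ℝ) := by
        have := Nat.choose_le_middle (N-j) (2*N)
        rw [show (2*N)/2 = N by omega] at this
        exact_mod_cast this
      have hr : ((2*N).choose (N-j):ℝ)/((2*N).choose N) ≤ 1 := (div_le_one hCpos).mpr hle
      rw [Real.norm_eq_abs, abs_of_nonneg (by positivity)]
      calc ((2*N).choose (N-j):ℝ)/((2*N).choose N) * g j ≤ 1 * g j :=
            mul_le_mul_of_nonneg_right hr (hgpos j).le
        _ = g j := one_mul _
    · rw [hf]; simp only; rw [if_neg h]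
      simpa using (hgpos j).le
  have hmain := tendsto_tsum_of_dominated_convergence hsum hpt hb
  rw [g_hasSum.tsum_eq] at hmain
  exact hmain.congr htsumf

lemma key1 (N : ℕ) : c (2*N) * Real.sqrt 24 ^ (2*N) =
    (2*(N:ℝ)+1) / 4^N * ∑ j ∈ range (N+1),
      ((2*N).choose (N-j):ℝ) * ((π/6)^(2*j) / ((2*j+1).factorial:ℝ)) := by
  unfold c
  rw [show (2*N+1)/2+1 = N+1 from by omega]
  have h24 : Real.sqrt 24 ^ (2*N) = 24^N := by
    rw [pow_mul, Real.sq_sqrt (by norm_num : (0:ℝ) ≤ 24)]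
  have h96 : (4*Real.sqrt 6)^(2*N) = 96^N := by
    rw [pow_mul, mul_pow, Real.sq_sqrt (by norm_num : (0:ℝ) ≤ 6)]
    norm_num
  have hneg : (-1:ℝ)^(2*N) = 1 := by rw [pow_mul]; norm_num
  have hterm : ∀ k ∈ range (N+1),
      ((2*N + 1).choose k : ℝ) * ((2*N + 1 - k : ℕ) : ℝ) / ((2*N + 1 - 2 * k).factorial : ℝ) *
        (π / 6) ^ (((2*N : ℕ) : ℤ) - 2 * k) =
      (2*(N:ℝ)+1) * (((2*N).choose k:ℝ) *
        ((π/6)^(2*(N-k)) / ((2*(N-k)+1).factorial:ℝ))) := by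
    intro k hk
    simp only [mem_range] at hk
    have hkN : k ≤ N := by omega
    have e1 := Nat.add_one_mul_choose_eq (2*N) k
    have e2 := Nat.choose_succ_right_eq (2*N+1) k
    have e3 : (2*N+1) * (2*N).choose k = (2*N+1).choose k * (2*N+1-k) := by
      omega
    have e3' : (2*(N:ℝ)+1) * ((2*N).choose k : ℝ) =
        ((2*N+1).choose k : ℝ) * ((2*N+1-k : ℕ) : ℝ) := by
      exact_mod_cast congrArg (fun t : ℕ => (t:ℝ)) e3
    have efac : (2*N+1-2*k).factorial = (2*(N-k)+1).factorial := by
      congr 1; omega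
    have hexp : (((2*N : ℕ) : ℤ) - 2 * k) = ((2*(N-k) : ℕ) : ℤ) := by
      push_cast [Nat.cast_sub hkN]; ring
    rw [hexp, zpow_natCast, efac]
    have hfac : (0:ℝ) < ((2*(N-k)+1).factorial : ℝ) := by
      exact_mod_cast (2*(N-k)+1).factorial_pos
    field_simp
    rw [← e3']
  rw [Finset.sum_congr rfl hterm, ← Finset.mul_sum]
  have hrefl : (∑ k ∈ range (N+1),
      (((2*N).choose k:ℝ) * ((π/6)^(2*(N-k)) / ((2*(N-k)+1).factorial:ℝ)))) =
      ∑ j ∈ range (N+1), ((2*N).choose (N-j):ℝ) * ((π/6)^(2*j) / ((2*j+1).factorial:ℝ)) := by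
    rw [← Finset.sum_range_reflect]
    refine sum_congr rfl fun k hk => ?_
    simp only [mem_range] at hk
    rw [show N+1-1-k = N-k by omega, show N-(N-k) = k by omega]
  rw [hrefl, hneg, h24, h96]
  have h964 : (96:ℝ)^N = 24^N * 4^N := by rw [← mul_pow]; norm_num
  rw [h964]
  have h4 : (0:ℝ) < 4^N := by positivity
  have h24' : (0:ℝ) < (24:ℝ)^N := by positivity
  field_simp

theorem stmt16 :
    Tendsto (fun N : ℕ => c (2 * N) * Real.sqrt 24 ^ (2 * N) /
        (6 * Real.sqrt 2 / π ^ ((3 : ℝ) / 2) * Real.sinh (π / 6) * Real.sqrt (2 * N + 1)))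
      atTop (𝓝 1) := by
  have hπ := Real.pi_pos
  have hsinh : 0 < Real.sinh (π/6) := Real.sinh_pos_iff.mpr (by positivity)
  set D : ℝ := 6 * Real.sqrt 2 / π ^ ((3 : ℝ) / 2) * Real.sinh (π / 6) with hD
  have hDpos : 0 < D := by rw [hD]; positivity
  -- limit of sqrt(2N+1)/sqrt N
  have hE : Tendsto (fun N : ℕ => Real.sqrt (2*(N:ℝ)+1)/Real.sqrt N) atTop
      (𝓝 (Real.sqrt 2)) := by
    have h1 : Tendsto (fun N : ℕ => 2 + 1/(N:ℝ)) atTop (𝓝 (2+0)) :=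
      tendsto_const_nhds.add tendsto_one_div_atTop_nhds_zero_nat
    rw [add_zero] at h1
    have h2 : Tendsto (fun N : ℕ => Real.sqrt (2 + 1/(N:ℝ))) atTop (𝓝 (Real.sqrt 2)) :=
      (Real.continuous_sqrt.tendsto 2).comp h1
    apply h2.congr'
    filter_upwards [eventually_ge_atTop 1] with N hN
    have hN' : (0:ℝ) < N := by exact_mod_cast hN
    rw [show 2 + 1/(N:ℝ) = (2*(N:ℝ)+1)/N by field_simp,
      Real.sqrt_div (by positivity)]
  have hF : Tendsto (fun N : ℕ =>
      (((2*N).choose N : ℝ) * Real.sqrt N / 4 ^ N) *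
      (∑ j ∈ range (N+1),
        (((2*N).choose (N-j):ℝ)/((2*N).choose N)) * ((π/6)^(2*j) / ((2*j+1).factorial:ℝ))) *
      (Real.sqrt (2*(N:ℝ)+1)/Real.sqrt N / D)) atTop
      (𝓝 (1 / Real.sqrt π * ((6/π) * Real.sinh (π/6)) * (Real.sqrt 2 / D))) :=
    (centralBinom_tendsto.mul B_tendsto).mul (hE.div_const D)
  have hone : 1 / Real.sqrt π * ((6/π) * Real.sinh (π/6)) * (Real.sqrt 2 / D) = 1 := by
    rw [hD]
    have hp32 : π ^ ((3:ℝ)/2) = π * Real.sqrt π := by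
      rw [Real.sqrt_eq_rpow, show (3:ℝ)/2 = 1 + 1/2 by norm_num, Real.rpow_add hπ,
        Real.rpow_one]
    rw [hp32]
    have h2 : Real.sqrt 2 ≠ 0 := by positivity
    have hsp : Real.sqrt π ≠ 0 := by positivity
    field_simp
  rw [hone] at hF
  apply hF.congr'
  filter_upwards [eventually_ge_atTop 1] with N hN
  have hN' : (0:ℝ) < N := by exact_mod_cast hN
  have hCpos : (0:ℝ) < ((2*N).choose N:ℝ) := by
    exact_mod_cast Nat.choose_pos (by omega : N ≤ 2*N)
  have hsN : (0:ℝ) < Real.sqrt N := Real.sqrt_pos.mpr hN'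
  have hs2N : (0:ℝ) < Real.sqrt (2*(N:ℝ)+1) := Real.sqrt_pos.mpr (by positivity)
  have h4 : (0:ℝ) < (4:ℝ)^N := by positivity
  have hkey2 : (∑ j ∈ range (N+1),
      ((2*N).choose (N-j):ℝ) * ((π/6)^(2*j) / ((2*j+1).factorial:ℝ))) =
      ((2*N).choose N : ℝ) * ∑ j ∈ range (N+1),
        (((2*N).choose (N-j):ℝ)/((2*N).choose N)) * ((π/6)^(2*j) / ((2*j+1).factorial:ℝ)) := by
    rw [Finset.mul_sum]
    refine sum_congr rfl fun j _ => ?_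
    field_simp
  have hself : Real.sqrt (2*(N:ℝ)+1) * Real.sqrt (2*(N:ℝ)+1) = 2*(N:ℝ)+1 :=
    Real.mul_self_sqrt (by positivity)
  show _ = c (2 * N) * Real.sqrt 24 ^ (2 * N) / (D * Real.sqrt (2 * (N:ℝ) + 1))
  rw [key1 N, hkey2]
  set S : ℝ := ∑ j ∈ range (N+1),
    (((2*N).choose (N-j):ℝ)/((2*N).choose N)) * ((π/6)^(2*j) / ((2*j+1).factorial:ℝ)) with hS
  clear_value S
  field_simp
  linear_combination S * hself
end

section
/- As N → +∞, the odd-indexed coefficients satisfy the asymptotic equivalence c_{2N+1} ~ −(6√2/π^{3/2}) · cosh(π/6) · √(2N+2)/(√24)^{2N+1}; that is, the quotient −c_{2N+1} · (√24)^{2N+1} / ((6√2/π^{3/2}) · cosh(π/6) · √(2N+2)) tends to 1. -/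
open Real Finset Filter Topology

namespace Stmt17Aux

noncomputable def u (M : ℕ) : ℝ := ((2 * M).choose M : ℝ) * Real.sqrt M / 4 ^ M

lemma u_eq {M : ℕ} (hM : 1 ≤ M) :
    Stirling.stirlingSeq (2 * M) / Stirling.stirlingSeq M ^ 2 = u M := by
  have hM0 : (0:ℝ) < M := by exact_mod_cast hM
  have hs : (0:ℝ) < Real.sqrt M := Real.sqrt_pos.mpr hM0
  have hs2 : Real.sqrt (M:ℝ) ^ 2 = M := Real.sq_sqrt hM0.le
  have h2 : (0:ℝ) < Real.sqrt 2 := by positivity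
  have hP : (0:ℝ) < ((M:ℝ) / exp 1) ^ M := by positivity
  have hF : (0:ℝ) < (M.factorial : ℝ) := by exact_mod_cast M.factorial_pos
  have hchoose : ((2*M).choose M : ℝ) * (M.factorial : ℝ) * (M.factorial : ℝ)
      = ((2*M).factorial : ℝ) := by
    have := Nat.choose_mul_factorial_mul_factorial (show M ≤ 2*M by omega)
    rw [show 2*M - M = M by omega] at this
    exact_mod_cast congrArg Nat.cast this
  have hsqrt4 : Real.sqrt (2 * ((2 * M : ℕ) : ℝ)) = 2 * Real.sqrt M := by
    push_cast
    rw [show (2:ℝ) * (2 * M) = 2^2 * M by ring, Real.sqrt_mul (by positivity),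
      Real.sqrt_sq (by norm_num)]
  have hsqrtM : Real.sqrt (2 * ((M:ℕ) : ℝ)) = Real.sqrt 2 * Real.sqrt M :=
    Real.sqrt_mul (by norm_num) _
  have hpow : (((2 * M : ℕ) : ℝ) / exp 1) ^ (2 * M) = 4 ^ M * (((M:ℝ) / exp 1) ^ M) ^ 2 := by
    push_cast
    rw [show ((2:ℝ) * M / exp 1) = 2 * ((M:ℝ) / exp 1) by ring, mul_pow, ← pow_mul,
      pow_mul 2 2 M]
    norm_num [mul_comm]
  have h2sq : Real.sqrt 2 ^ 2 = 2 := Real.sq_sqrt (by norm_num)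
  rw [Stirling.stirlingSeq, Stirling.stirlingSeq, u, hsqrt4, hsqrtM, hpow]
  rw [div_pow (M.factorial : ℝ), mul_pow, mul_pow, h2sq, hs2]
  rw [div_div_div_eq, div_eq_div_iff (by positivity) (by positivity)]
  rw [← hchoose]
  ring_nf
  rw [hs2]
  ring


lemma u_tendsto : Tendsto u atTop (𝓝 (1 / Real.sqrt π)) := by
  have h2M : Tendsto (fun M : ℕ => 2 * M) atTop atTop :=
    tendsto_atTop_atTop.mpr fun b => ⟨b, fun a ha => by omega⟩
  have hne : Real.sqrt π ^ 2 ≠ 0 := by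
    rw [Real.sq_sqrt pi_pos.le]; exact pi_ne_zero
  have h1 : Tendsto (fun M => Stirling.stirlingSeq (2*M) / Stirling.stirlingSeq M ^ 2)
      atTop (𝓝 (Real.sqrt π / Real.sqrt π ^ 2)) :=
    (Stirling.tendsto_stirlingSeq_sqrt_pi.comp h2M).div
      (Stirling.tendsto_stirlingSeq_sqrt_pi.pow 2) hne
  have hval : Real.sqrt π / Real.sqrt π ^ 2 = 1 / Real.sqrt π := by
    have h0 : Real.sqrt π ≠ 0 := ne_of_gt (Real.sqrt_pos.mpr pi_pos)
    rw [pow_two]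
    field_simp
  rw [hval] at h1
  exact h1.congr' (eventually_atTop.mpr ⟨1, fun M hM => u_eq hM⟩)

lemma nat_div_tendsto (a b : ℝ) :
    Tendsto (fun M : ℕ => ((M:ℝ) + a) / ((M:ℝ) + b)) atTop (𝓝 1) := by
  have hb : Tendsto (fun M : ℕ => (M:ℝ) + b) atTop atTop :=
    tendsto_atTop_add_const_right _ b tendsto_natCast_atTop_atTop
  have h0 : Tendsto (fun M : ℕ => (a - b) / ((M:ℝ) + b)) atTop (𝓝 0) :=
    tendsto_const_nhds.div_atTop hb
  have h1 : Tendsto (fun M : ℕ => 1 + (a - b) / ((M:ℝ) + b)) atTop (𝓝 (1 + 0)) :=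
    tendsto_const_nhds.add h0
  rw [add_zero] at h1
  refine h1.congr' ?_
  filter_upwards [hb.eventually_gt_atTop 0] with M hM
  field_simp
  ring

lemma ratio_tendsto (j : ℕ) :
    Tendsto (fun M : ℕ => ((2 * M).choose (M - j) : ℝ) / ((2 * M).choose M : ℝ))
      atTop (𝓝 1) := by
  induction j with
  | zero =>
    refine Tendsto.congr (fun M => ?_) (tendsto_const_nhds (x := (1:ℝ)))
    rw [Nat.sub_zero, div_self]
    exact_mod_cast (Nat.choose_pos (by omega : M ≤ 2 * M)).ne'
  | succ j ih =>
    have hq : Tendsto (fun M : ℕ => ((M - j : ℕ) : ℝ) / ((M:ℝ) + ((j:ℝ) + 1)))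
        atTop (𝓝 1) := by
      refine (nat_div_tendsto (-(j:ℝ)) ((j:ℝ)+1)).congr' ?_
      filter_upwards [eventually_atTop.mpr ⟨j, fun M hM => hM⟩] with M hM
      rw [Nat.cast_sub hM]
      ring_nf
    have := ih.mul hq
    rw [mul_one] at this
    refine this.congr' ?_
    filter_upwards [eventually_atTop.mpr ⟨j + 1, fun M hM => hM⟩] with M hM
    have key : (2 * M).choose (M - j) * (M - j) = (2 * M).choose (M - (j+1)) * (M + j + 1) := by
      have h := Nat.choose_succ_right_eq (2 * M) (M - (j+1))
      rw [show M - (j+1) + 1 = M - j by omega, show 2 * M - (M - (j+1)) = M + j + 1 by omega] at h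
      exact h
    have keyR : ((2 * M).choose (M - j) : ℝ) * ((M - j : ℕ) : ℝ)
        = ((2 * M).choose (M - (j+1)) : ℝ) * ((M:ℝ) + ((j:ℝ) + 1)) := by
      have := congrArg (Nat.cast (R := ℝ)) key
      push_cast at this
      linarith [this]
    have hpos : ((M:ℝ) + ((j:ℝ) + 1)) ≠ 0 := by positivity
    rw [div_mul_div_comm, keyR, mul_comm ((2 * M).choose M : ℝ),
      mul_comm ((2 * M).choose (M - (j+1)) : ℝ), mul_div_mul_left _ _ hpos]


noncomputable def g (j : ℕ) : ℝ := ((π/6) ^ (2 * j) / ((2 * j).factorial : ℝ)) / (π/6)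

lemma x_pos : (0:ℝ) < π/6 := by positivity

lemma g_nonneg (j : ℕ) : 0 ≤ g j := by
  unfold g; positivity

lemma g_summable : Summable g :=
  (Real.hasSum_cosh (π/6)).summable.div_const _

lemma tsum_g : ∑' j, g j = Real.cosh (π/6) / (π/6) := by
  unfold g
  rw [tsum_div_const, Real.cosh_eq_tsum]

noncomputable def f (N j : ℕ) : ℝ :=
  if j ≤ N + 1 then
    (((2 * (N+1)).choose ((N+1) - j) : ℝ) / ((2 * (N+1)).choose (N+1) : ℝ)) *
      ((((N+1:ℕ):ℝ) + (j:ℝ)) / ((N+1:ℕ):ℝ)) * g j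
  else 0

lemma f_bound (N j : ℕ) : ‖f N j‖ ≤ 2 * g j := by
  unfold f
  split_ifs with h
  · have hC : (0:ℝ) < ((2 * (N+1)).choose (N+1) : ℝ) := by
      exact_mod_cast Nat.choose_pos (by omega : N + 1 ≤ 2 * (N+1))
    have hr1 : (((2 * (N+1)).choose ((N+1) - j) : ℝ) / ((2 * (N+1)).choose (N+1) : ℝ)) ≤ 1 := by
      rw [div_le_one hC]
      exact_mod_cast (Nat.choose_le_middle ((N+1) - j) (2 * (N+1))).trans_eq
        (by rw [show 2 * (N+1) / 2 = N + 1 by omega])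
    have hr0 : (0:ℝ) ≤ (((2 * (N+1)).choose ((N+1) - j) : ℝ) / ((2 * (N+1)).choose (N+1) : ℝ)) := by
      positivity
    have hs2 : ((((N+1:ℕ):ℝ) + (j:ℝ)) / ((N+1:ℕ):ℝ)) ≤ 2 := by
      rw [div_le_iff₀ (by positivity)]
      push_cast
      have : (j:ℝ) ≤ (N:ℝ) + 1 := by exact_mod_cast h
      linarith
    have hs0 : (0:ℝ) ≤ ((((N+1:ℕ):ℝ) + (j:ℝ)) / ((N+1:ℕ):ℝ)) := by positivity
    rw [Real.norm_eq_abs, abs_of_nonneg (mul_nonneg (mul_nonneg hr0 hs0) (g_nonneg j))]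
    have h12 : (((2 * (N+1)).choose ((N+1) - j) : ℝ) / ((2 * (N+1)).choose (N+1) : ℝ)) *
        ((((N+1:ℕ):ℝ) + (j:ℝ)) / ((N+1:ℕ):ℝ)) ≤ 1 * 2 := mul_le_mul hr1 hs2 hs0 (by norm_num)
    have := mul_le_mul_of_nonneg_right h12 (g_nonneg j)
    linarith
  · simpa using mul_nonneg (by norm_num : (0:ℝ) ≤ 2) (g_nonneg j)

lemma f_tendsto (j : ℕ) : Tendsto (fun N => f N j) atTop (𝓝 (g j)) := by
  have hadd : Tendsto (fun N : ℕ => N + 1) atTop atTop := tendsto_add_atTop_nat 1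
  have hr : Tendsto (fun N : ℕ =>
      ((2 * (N+1)).choose ((N+1) - j) : ℝ) / ((2 * (N+1)).choose (N+1) : ℝ))
      atTop (𝓝 1) := (ratio_tendsto j).comp hadd
  have hs : Tendsto (fun N : ℕ => (((N+1:ℕ):ℝ) + (j:ℝ)) / ((N+1:ℕ):ℝ))
      atTop (𝓝 1) := by
    have := (nat_div_tendsto (j:ℝ) 0).comp hadd
    refine this.congr fun N => ?_
    simp
  have := (hr.mul hs).mul (tendsto_const_nhds (x := g j))
  rw [one_mul, one_mul] at this
  refine this.congr' ?_
  filter_upwards [eventually_atTop.mpr ⟨j, fun N hN => hN⟩] with N hN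
  rw [f, if_pos (by omega)]

lemma T_tendsto : Tendsto (fun N => ∑' j, f N j) atTop (𝓝 (Real.cosh (π/6) / (π/6))) := by
  rw [← tsum_g]
  exact tendsto_tsum_of_dominated_convergence (g_summable.mul_left 2) f_tendsto
    (Eventually.of_forall fun N => f_bound N)

lemma tsum_f_eq_sum (N : ℕ) : ∑' j, f N j = ∑ j ∈ Finset.range (N+2), f N j :=
  tsum_eq_sum fun j hj => by
    rw [f, if_neg]
    simp only [Finset.mem_range] at hj
    omega


lemma sum_identity (N : ℕ) :
    -(c (2 * N + 1)) * Real.sqrt 24 ^ (2 * N + 1)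
      = ((2 * (N+1)).choose (N+1) : ℝ) * ((N+1:ℕ):ℝ) * (∑' j, f N j) / 2 ^ (2 * N + 1) := by
  have hx : (π/6 : ℝ) ≠ 0 := ne_of_gt x_pos
  have hC : (0:ℝ) < ((2 * (N+1)).choose (N+1) : ℝ) := by
    exact_mod_cast Nat.choose_pos (by omega : N + 1 ≤ 2 * (N+1))
  have h24 : Real.sqrt 24 = 2 * Real.sqrt 6 := by
    rw [show (24:ℝ) = 2^2 * 6 by norm_num, Real.sqrt_mul (by positivity), Real.sqrt_sq (by norm_num)]
  have hs24 : (0:ℝ) < Real.sqrt 24 := Real.sqrt_pos.mpr (by norm_num)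
  have hS : (∑ k ∈ Finset.range ((2*N+1 + 1) / 2 + 1),
      ((2*N+1 + 1).choose k : ℝ) * ((2*N+1 + 1 - k : ℕ) : ℝ) / ((2*N+1 + 1 - 2 * k).factorial : ℝ) *
        (π / 6) ^ (((2*N+1 : ℕ) : ℤ) - 2 * (k:ℤ)))
      = ((2 * (N+1)).choose (N+1) : ℝ) * ((N+1:ℕ):ℝ) * ∑ j ∈ Finset.range (N+2), f N j := by
    rw [show (2*N+1+1)/2 + 1 = N + 2 by omega]
    rw [← Finset.sum_range_reflect]
    rw [Finset.mul_sum]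
    refine Finset.sum_congr rfl fun j hj => ?_
    rw [Finset.mem_range] at hj
    have hj' : j ≤ N + 1 := by omega
    rw [show N + 2 - 1 - j = N + 1 - j by omega]
    rw [show 2*N+1+1 = 2*(N+1) by ring]
    rw [show 2*(N+1) - (N+1-j) = N+1+j by omega]
    rw [show 2*(N+1) - 2*(N+1-j) = 2*j by omega]
    have hexp : ((2*N+1 : ℕ) : ℤ) - 2 * ((N+1-j : ℕ) : ℤ) = 2 * (j:ℤ) - 1 := by omega
    rw [hexp, zpow_sub₀ hx, zpow_one,
      show (2*(j:ℤ)) = ((2*j:ℕ):ℤ) by push_cast; ring, zpow_natCast]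
    rw [f, if_pos hj', g]
    have hfac : ((2*j).factorial : ℝ) ≠ 0 := by exact_mod_cast (2*j).factorial_ne_zero
    push_cast
    field_simp
  rw [c, hS, tsum_f_eq_sum]
  have hneg : ((-1:ℝ)) ^ (2*N+1) = -1 := Odd.neg_one_pow ⟨N, by ring⟩
  have h4 : ((4:ℝ) * Real.sqrt 6) ^ (2*N+1) = 2^(2*N+1) * Real.sqrt 24 ^ (2*N+1) := by
    rw [← mul_pow, h24]; ring_nf
  rw [hneg, h4]
  have h2 : ((2:ℝ))^(2*N+1) ≠ 0 := by positivity
  field_simp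

end Stmt17Aux

theorem stmt17 :
    Tendsto (fun N : ℕ => -(c (2 * N + 1)) * Real.sqrt 24 ^ (2 * N + 1) /
        (6 * Real.sqrt 2 / π ^ ((3 : ℝ) / 2) * Real.cosh (π / 6) * Real.sqrt (2 * N + 2)))
      atTop (𝓝 1) := by
  have hrpow : π ^ ((3:ℝ)/2) = π * Real.sqrt π := by
    rw [show (3:ℝ)/2 = 1 + 1/2 by norm_num, Real.rpow_add pi_pos, Real.rpow_one,
      ← Real.sqrt_eq_rpow]
  have hcosh : (0:ℝ) < Real.cosh (π/6) := Real.cosh_pos _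
  have hK : (0:ℝ) < 6 * Real.sqrt 2 / π ^ ((3:ℝ)/2) * Real.cosh (π/6) := by
    have := Real.rpow_pos_of_pos pi_pos ((3:ℝ)/2)
    positivity
  have key : ∀ N : ℕ, -(c (2 * N + 1)) * Real.sqrt 24 ^ (2 * N + 1) /
        (6 * Real.sqrt 2 / π ^ ((3:ℝ)/2) * Real.cosh (π/6) * Real.sqrt (2 * ↑N + 2))
      = (∑' j, Stmt17Aux.f N j) * Stmt17Aux.u (N+1) *
        (Real.sqrt 2 / (6 * Real.sqrt 2 / π ^ ((3:ℝ)/2) * Real.cosh (π/6))) := by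
    intro N
    rw [Stmt17Aux.sum_identity N, Stmt17Aux.u]
    have hs : (0:ℝ) < Real.sqrt ((N+1:ℕ):ℝ) := Real.sqrt_pos.mpr (by positivity)
    have hs2 : Real.sqrt ((N+1:ℕ):ℝ) ^ 2 = ((N+1:ℕ):ℝ) := Real.sq_sqrt (by positivity)
    have h2N : Real.sqrt (2 * (N:ℝ) + 2) = Real.sqrt 2 * Real.sqrt ((N+1:ℕ):ℝ) := by
      rw [← Real.sqrt_mul (by norm_num)]
      congr 1
      push_cast
      ring
    have h4 : ((4:ℝ)) ^ (N+1) = 2 * 2 ^ (2*N+1) := by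
      rw [show (4:ℝ) = 2^2 by norm_num, ← pow_mul]
      rw [show 2*(N+1) = (2*N+1)+1 by ring]
      ring
    rw [h2N, h4]
    have hsq2 : Real.sqrt 2 * Real.sqrt 2 = 2 := Real.mul_self_sqrt (by norm_num)
    have h2p : ((2:ℝ)) ^ (2*N+1) ≠ 0 := by positivity
    have hs2' : Real.sqrt ((N:ℝ)+1) ^ 2 = (N:ℝ)+1 := Real.sq_sqrt (by positivity)
    field_simp
    rw [hs2, Real.sq_sqrt (by norm_num : (0:ℝ) ≤ 2)]
    ring
  have hT := Stmt17Aux.T_tendsto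
  have hu := Stmt17Aux.u_tendsto.comp (tendsto_add_atTop_nat 1)
  have hlim := (hT.mul hu).mul (tendsto_const_nhds
    (x := Real.sqrt 2 / (6 * Real.sqrt 2 / π ^ ((3:ℝ)/2) * Real.cosh (π/6))))
  have hval : Real.cosh (π/6) / (π/6) * (1 / Real.sqrt π) *
      (Real.sqrt 2 / (6 * Real.sqrt 2 / π ^ ((3:ℝ)/2) * Real.cosh (π/6))) = 1 := by
    rw [hrpow]
    have hsp : Real.sqrt π * Real.sqrt π = π := Real.mul_self_sqrt pi_pos.le
    have hsp0 : Real.sqrt π ≠ 0 := ne_of_gt (Real.sqrt_pos.mpr pi_pos)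
    have hs20 : Real.sqrt 2 ≠ 0 := by positivity
    field_simp
  rw [hval] at hlim
  exact hlim.congr fun N => (key N).symm
end

section
/- For every nonnegative integer m, the scaled coefficient c̃_{2m} = (4√6)^{2m} · c_{2m} satisfies the lower bound c̃_{2m} ≥ (6/π) · (2m+1) · binom(2m, m) · (1 − (π²/72)·(1/(2m+2))) · Σ_{k=0}^{m} (1/(2k+1)!) · (π/6)^{2k+1}. -/
open Real Finset Filter Topology

namespace S19

def f (m k : ℕ) : ℕ := (2*m+1).choose (m - k) * (m + 1 + k)

def C (m : ℕ) : ℕ := (2*m+1) * (2*m).choose m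

noncomputable def t (x : ℝ) (k : ℕ) : ℝ := x ^ (2*k) / ((2*k+1).factorial : ℝ)

lemma f_zero (m : ℕ) : f m 0 = C m := by
  unfold f C
  have h1 : (2*m+1).choose (m+1) * (m+1) = (2*m+1) * (2*m).choose m := by
    simpa [Nat.succ_eq_add_one] using (Nat.add_one_mul_choose_eq (2*m) m).symm
  have h2 : (2*m+1).choose m = (2*m+1).choose (m+1) := by
    have h := Nat.choose_symm (show m+1 ≤ 2*m+1 by omega)
    rw [show 2*m+1-(m+1) = m from by omega] at h
    exact h
  simp only [Nat.sub_zero, Nat.add_zero]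
  rw [h2, h1]

lemma f_rec (m k : ℕ) (h : k < m) : f m (k+1) * (m+1+k) = f m k * (m - k) := by
  have h1 : (2*m+1).choose (m-k) * (m-k) = (2*m+1).choose (m-k-1) * (m+2+k) := by
    have h' := Nat.choose_succ_right_eq (2*m+1) (m-k-1)
    rw [show m-k-1+1 = m-k from by omega] at h'
    rw [show 2*m+1-(m-k-1) = m+2+k from by omega] at h'
    exact h'
  unfold f
  rw [show m-(k+1) = m-k-1 from by omega]
  calc (2*m+1).choose (m-k-1) * (m+1+(k+1)) * (m+1+k)
      = (2*m+1).choose (m-k-1) * (m+2+k) * (m+1+k) := by ring_nf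
    _ = (2*m+1).choose (m-k) * (m-k) * (m+1+k) := by rw [← h1]
    _ = (2*m+1).choose (m-k) * (m+1+k) * (m-k) := by ring

lemma f_le (m : ℕ) : ∀ k ≤ m, f m k ≤ C m := by
  intro k
  induction k with
  | zero => intro _; exact (f_zero m).le
  | succ k ih =>
    intro hk
    have h := f_rec m k (by omega)
    have h2 : f m (k+1) * (m+1+k) ≤ f m k * (m+1+k) := by
      rw [h]; exact Nat.mul_le_mul_left _ (by omega)
    exact le_trans (Nat.le_of_mul_le_mul_right h2 (by omega)) (ih (by omega))

lemma step (m k : ℕ) (h : k < m) : (m+1) * f m k ≤ (m+1) * f m (k+1) + (2*k+1) * C m := by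
  apply Nat.le_of_mul_le_mul_right _ (show 0 < m+1+k by omega)
  have hrec := f_rec m k h
  have hC : f m k * (m+1) ≤ C m * (m+1+k) :=
    Nat.mul_le_mul (f_le m k h.le) (by omega)
  calc (m+1) * f m k * (m+1+k)
      = (m+1)*(f m k*(m-k)) + (f m k*(m+1))*(2*k+1) := by
        rw [show m+1+k = (m-k) + (2*k+1) from by omega]; ring
    _ = (m+1)*(f m (k+1)*(m+1+k)) + (f m k*(m+1))*(2*k+1) := by rw [hrec]
    _ ≤ (m+1)*(f m (k+1)*(m+1+k)) + (C m*(m+1+k))*(2*k+1) :=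
        Nat.add_le_add_left (Nat.mul_le_mul_right _ hC) _
    _ = ((m+1)*f m (k+1) + (2*k+1)*C m) * (m+1+k) := by ring

lemma key (m : ℕ) : ∀ k ≤ m, 4*(m+1)*(C m) ≤ 4*(m+1)*(f m k) + 2*k*(2*k+1)*(C m) := by
  intro k
  induction k with
  | zero => intro _; simp [f_zero]
  | succ k ih =>
    intro hk
    have h1 := ih (by omega)
    have h2 := step m k (by omega)
    nlinarith [h1, h2]

lemma hc (m : ℕ) : (4 * Real.sqrt 6) ^ (2 * m) * c (2 * m)
    = ∑ k ∈ Finset.range (m+1), (f m k : ℝ) * t (π/6) k := by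
  have hP : (0:ℝ) < (4 * Real.sqrt 6) ^ (2*m) := by positivity
  unfold c
  rw [show (2*m+1)/2 = m from by omega]
  rw [show ((-1:ℝ))^(2*m) = 1 from by rw [pow_mul]; norm_num]
  rw [← mul_assoc, mul_one_div, div_self hP.ne', one_mul]
  rw [← Finset.sum_range_reflect (fun k => (f m k : ℝ) * t (π/6) k) (m+1)]
  apply Finset.sum_congr rfl
  intro k hk
  have hk' : k ≤ m := by have := Finset.mem_range.mp hk; omega
  rw [show m+1-1-k = m-k from by omega]
  rw [show ((2*m : ℕ) : ℤ) - 2*(k : ℕ) = ((2*(m-k) : ℕ) : ℤ) from by push_cast; omega]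
  rw [zpow_natCast]
  rw [show 2*m+1 - k = m+1+(m-k) from by omega]
  rw [show 2*m+1 - 2*k = 2*(m-k)+1 from by omega]
  unfold f t
  rw [show m - (m-k) = k from by omega]
  push_cast
  ring

lemma hRHS (m : ℕ) :
    6 / π * (2 * (m:ℝ) + 1) * ((2 * m).choose m : ℝ) * (1 - π ^ 2 / 72 * (1 / (2 * (m:ℝ) + 2))) *
        ∑ k ∈ Finset.range (m + 1), 1 / ((2 * k + 1).factorial : ℝ) * (π / 6) ^ (2 * k + 1)
    = ((2 * (m:ℝ) + 1) * ((2 * m).choose m : ℝ)) * ∑ k ∈ Finset.range (m + 1), t (π/6) k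
      - ((2 * (m:ℝ) + 1) * ((2 * m).choose m : ℝ)) * (π/6)^2 / (4*((m:ℝ)+1))
          * ∑ k ∈ Finset.range (m + 1), t (π/6) k := by
  have hπ : (0:ℝ) < π := Real.pi_pos
  have hsum : ∑ k ∈ Finset.range (m + 1), 1 / ((2 * k + 1).factorial : ℝ) * (π / 6) ^ (2 * k + 1)
      = (π/6) * ∑ k ∈ Finset.range (m + 1), t (π/6) k := by
    rw [Finset.mul_sum]
    refine Finset.sum_congr rfl fun k _ => ?_
    unfold t
    rw [pow_succ]
    ring
  rw [hsum]
  have hm : ((m:ℝ)+1) ≠ 0 := by positivity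
  field_simp
  ring

lemma hmain (m : ℕ) :
    ((2 * (m:ℝ) + 1) * ((2 * m).choose m : ℝ)) * ∑ k ∈ Finset.range (m + 1), t (π/6) k
      - ((2 * (m:ℝ) + 1) * ((2 * m).choose m : ℝ)) * (π/6)^2 / (4*((m:ℝ)+1))
          * ∑ k ∈ Finset.range (m + 1), t (π/6) k
    ≤ ∑ k ∈ Finset.range (m+1), (f m k : ℝ) * t (π/6) k := by
  have hπ : (0:ℝ) < π := Real.pi_pos
  set x : ℝ := π/6 with hxdef
  have hx : (0:ℝ) < x := by positivity
  set D : ℝ := (2 * (m:ℝ) + 1) * ((2 * m).choose m : ℝ) with hD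
  have hD0 : (0:ℝ) ≤ D := by positivity
  have hCD : (C m : ℝ) = D := by rw [hD]; unfold C; push_cast; ring
  have hT1 : ∑ k ∈ Finset.range (m + 1), t x k
      = (∑ j ∈ Finset.range m, t x (j+1)) + t x 0 := Finset.sum_range_succ' _ m
  have htnn : ∀ k, (0:ℝ) ≤ t x k := fun k => by unfold t; positivity
  have hTlow : ∑ j ∈ Finset.range m, t x j ≤ ∑ k ∈ Finset.range (m + 1), t x k :=
    Finset.sum_le_sum_of_subset_of_nonneg (Finset.range_subset_range.mpr (by omega))
      (fun i _ _ => htnn i)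
  have hdel0 : (0:ℝ) ≤ D * x^2 / (4*((m:ℝ)+1)) := by positivity
  have hstep : ∀ j ∈ Finset.range m,
      D * t x (j+1) - D * x^2 / (4*((m:ℝ)+1)) * t x j ≤ (f m (j+1) : ℝ) * t x (j+1) := by
    intro j hj
    have hjm : j < m := Finset.mem_range.mp hj
    have hkey := key m (j+1) (by omega)
    have hkeyR : (4*((m:ℝ)+1)) * D ≤ 4*((m:ℝ)+1)*(f m (j+1):ℝ) + 2*((j:ℝ)+1)*(2*(j:ℝ)+3)*D := by
      have h' := (Nat.cast_le (α := ℝ)).mpr hkey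
      push_cast at h'
      rw [hCD] at h'
      nlinarith [h']
    have h4n : (0:ℝ) < 4*((m:ℝ)+1) := by positivity
    have hq : D ≤ (f m (j+1):ℝ) + D*((2*(j:ℝ)+2)*(2*(j:ℝ)+3))/(4*((m:ℝ)+1)) := by
      rw [← sub_le_iff_le_add']
      rw [le_div_iff₀ h4n]
      nlinarith [hkeyR]
    have hfac : (((2*(j+1)+1).factorial : ℕ) : ℝ)
        = ((2*(j:ℝ)+3) * (2*(j:ℝ)+2)) * ((2*j+1).factorial : ℝ) := by
      rw [show 2*(j+1)+1 = (2*j+2)+1 from by ring, Nat.factorial_succ,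
        show 2*j+2 = (2*j+1)+1 from rfl, Nat.factorial_succ]
      push_cast
      ring
    have hfac0 : ((2*j+1).factorial : ℝ) ≠ 0 := by positivity
    have h1 : (0:ℝ) ≤ t x (j+1) := htnn (j+1)
    have hcalc : (↑(f m (j+1)) + D*((2*(j:ℝ)+2)*(2*(j:ℝ)+3))/(4*((m:ℝ)+1))) * t x (j+1)
        = (f m (j+1) : ℝ) * t x (j+1) + D * x^2 / (4*((m:ℝ)+1)) * t x j := by
      unfold t
      rw [hfac]
      rw [show 2*(j+1) = (2*j)+2 from by ring, pow_add]
      have e1 : (2*(j:ℝ)+3) ≠ 0 := by positivity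
      have e2 : (2*(j:ℝ)+2) ≠ 0 := by positivity
      have e3 : ((m:ℝ)+1) ≠ 0 := by positivity
      field_simp
    calc D * t x (j+1) - D * x^2 / (4*((m:ℝ)+1)) * t x j
        ≤ (↑(f m (j+1)) + D*((2*(j:ℝ)+2)*(2*(j:ℝ)+3))/(4*((m:ℝ)+1))) * t x (j+1)
            - D * x^2 / (4*((m:ℝ)+1)) * t x j := by
          have := mul_le_mul_of_nonneg_right hq h1
          linarith
      _ = (f m (j+1) : ℝ) * t x (j+1) := by rw [hcalc]; ring
  calc D * (∑ k ∈ Finset.range (m + 1), t x k)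
        - D * x^2 / (4*((m:ℝ)+1)) * ∑ k ∈ Finset.range (m + 1), t x k
      ≤ D * (∑ k ∈ Finset.range (m + 1), t x k)
        - D * x^2 / (4*((m:ℝ)+1)) * ∑ j ∈ Finset.range m, t x j := by
        have := mul_le_mul_of_nonneg_left hTlow hdel0
        linarith
    _ = (∑ j ∈ Finset.range m, (D * t x (j+1) - D * x^2 / (4*((m:ℝ)+1)) * t x j))
        + D * t x 0 := by
        simp only [hT1, mul_add, Finset.mul_sum, Finset.sum_sub_distrib]
        ring
    _ ≤ (∑ j ∈ Finset.range m, (f m (j+1) : ℝ) * t x (j+1)) + (f m 0 : ℝ) * t x 0 := by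
        refine add_le_add (Finset.sum_le_sum hstep) (le_of_eq ?_)
        rw [f_zero, hCD]
    _ = ∑ k ∈ Finset.range (m+1), (f m k : ℝ) * t x k :=
        (Finset.sum_range_succ' (fun k => (f m k : ℝ) * t x k) m).symm

end S19

theorem stmt19 (m : ℕ) :
    (4 * Real.sqrt 6) ^ (2 * m) * c (2 * m) ≥
      6 / π * (2 * m + 1) * ((2 * m).choose m : ℝ) * (1 - π ^ 2 / 72 * (1 / (2 * m + 2))) *
        ∑ k ∈ Finset.range (m + 1), 1 / ((2 * k + 1).factorial : ℝ) * (π / 6) ^ (2 * k + 1) := by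
  rw [ge_iff_le, S19.hc m]
  exact le_trans (le_of_eq (S19.hRHS m)) (S19.hmain m)
end
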